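/- arXiv:1401.1649 — 2 statements merged into one kernel-verified Lean document; each statement's English description precedes it below -/
import Mathlib

section
/- Let m ≥ 2 be an integer and set α_m = 1 − 1/m. There exists a constant C_m > 0 such that for every integer k ≥ 2: Λ_m^{α_m}(k) ≥ C_m · k^{m−1} · log k, equivalently Ξ_m^{α_m}(k) ≥ C_m · log k. -/
open scoped ENNReal
open scoped Classical

noncomputable section

/-- Points of `ℝ^m` with the Euclidean norm. -/
abbrev Pt (m : ℕ) : Type := EuclideanSpace ℝ (Fin m)

/-- A finite weighted directed graph in `ℝ^m`: a finite vertex set, a finite set of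
directed segments `e = (e⁻, e⁺)`, and a multiplicity function. -/
structure BrGraph (m : ℕ) where
  V : Finset (Pt m)
  E : Finset (Pt m × Pt m)
  d : Pt m × Pt m → ℕ

/-- `G` is a weighted directed graph connecting the finite set `A` to the boundary of `Ω`:
`A ⊆ V(G) ⊆ cl Ω`; edges have distinct endpoints in `V(G)`; no edge appears with both
orientations; multiplicities are `≥ 1`; and the Kirchhoff balance law holds at every
vertex not on `∂Ω`. -/
def BrGraph.IsConn {m : ℕ} (G : BrGraph m) (A : Finset (Pt m)) (Ω : Set (Pt m)) : Prop :=
  A ⊆ G.V ∧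
  (G.V : Set (Pt m)) ⊆ closure Ω ∧
  (∀ e ∈ G.E, e.1 ∈ G.V ∧ e.2 ∈ G.V ∧ e.1 ≠ e.2) ∧
  (∀ e ∈ G.E, (e.2, e.1) ∉ G.E) ∧
  (∀ e ∈ G.E, 1 ≤ G.d e) ∧
  ∀ a ∈ G.V, a ∉ frontier Ω →
    (∑ e ∈ G.E.filter (fun e => e.1 = a), G.d e) =
      (∑ e ∈ G.E.filter (fun e => e.2 = a), G.d e) + (if a ∈ A then 1 else 0)

/-- The cost `W_α(G) = ∑_{e ∈ E(G)} d(e)^α · ℓ(e)` where `ℓ(e) = |e⁺ − e⁻|`. -/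
def BrGraph.cost {m : ℕ} (α : ℝ) (G : BrGraph m) : ℝ :=
  ∑ e ∈ G.E, (G.d e : ℝ) ^ α * ‖e.2 - e.1‖

/-- The branched connection `ℒ^α_brbd(A, ∂Ω) = inf { W_α(G) : G ∈ 𝒢(A, ∂Ω) }`
(valued in `[0, ∞]`, equal to `∞` if no connecting graph exists). -/
def Lbrbd (m : ℕ) (α : ℝ) (A : Finset (Pt m)) (Ω : Set (Pt m)) : ℝ≥0∞ :=
  ⨅ (G : BrGraph m) (_ : G.IsConn A Ω), ENNReal.ofReal (G.cost α)

/-- The open unit cube `(0,1)^m ⊆ ℝ^m`. -/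
def unitCube (m : ℕ) : Set (Pt m) := {x | ∀ j, x j ∈ Set.Ioo (0 : ℝ) 1}

/-- The uniform grid `A_m^k = { (i₁/k, …, i_m/k) : i₁, …, i_m ∈ {1, …, k} }` of `k^m`
points. -/
def gridA (m k : ℕ) : Finset (Pt m) :=
  (Fintype.piFinset fun _ : Fin m => Finset.Icc 1 k).image
    fun I => (WithLp.equiv 2 (Fin m → ℝ)).symm fun j => (I j : ℝ) / k

/-- `Λ_m^α(k) = ℒ^α_brbd(A_m^k, ∂(0,1)^m)`. -/
def LamGrid (m : ℕ) (α : ℝ) (k : ℕ) : ℝ≥0∞ := Lbrbd m α (gridA m k) (unitCube m)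

/-- `Ξ_m^α(k) = k^{−mα} · Λ_m^α(k)`. -/
def XiGrid (m : ℕ) (α : ℝ) (k : ℕ) : ℝ≥0∞ :=
  ENNReal.ofReal ((k : ℝ) ^ (-((m : ℝ) * α))) * LamGrid m α k


namespace S15
set_option linter.unusedSectionVars false

section Decomp
variable {α : Type*} [DecidableEq α]


variable {α : Type*} [DecidableEq α]

def wedges (L : List α) : List (α × α) := L.zip L.tail

@[simp] lemma wedges_nil : wedges ([] : List α) = [] := rfl
@[simp] lemma wedges_single (x : α) : wedges [x] = [] := rfl
@[simp] lemma wedges_cons₂ (x y : α) (t : List α) :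
    wedges (x :: y :: t) = (x, y) :: wedges (y :: t) := rfl

lemma mem_wedges_cons {e : α × α} {x : α} {L : List α} (h : e ∈ wedges L) :
    e ∈ wedges (x :: L) := by
  cases L with
  | nil => simp [wedges] at h
  | cons y t => simp only [wedges_cons₂]; exact List.mem_cons_of_mem _ h

lemma mem_wedges_append {e : α × α} (s : List α) {L : List α} (h : e ∈ wedges L) :
    e ∈ wedges (s ++ L) := by
  induction s with
  | nil => simpa using h
  | cons x t ih => exact mem_wedges_cons ih

lemma mem_wedges_fst {e : α × α} : ∀ {L : List α}, e ∈ wedges L → e.1 ∈ L := by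
  intro L
  induction L with
  | nil => intro h; simp [wedges] at h
  | cons x t ih =>
    intro h
    cases t with
    | nil => simp [wedges] at h
    | cons y u =>
      rcases List.mem_cons.1 h with h | h
      · subst h; exact List.mem_cons_self
      · exact List.mem_cons_of_mem _ (ih h)

lemma nodup_wedges : ∀ {L : List α}, L.Nodup → (wedges L).Nodup := by
  intro L
  induction L with
  | nil => intro _; simp [wedges]
  | cons x t ih =>
    intro h
    cases t with
    | nil => simp [wedges]
    | cons y u =>
      rcases List.nodup_cons.1 h with ⟨hx, ht⟩
      refine List.nodup_cons.2 ⟨?_, ih ht⟩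
      intro hmem
      exact hx (mem_wedges_fst hmem)

lemma chain'_wedges {R : α → α → Prop} : ∀ {L : List α}, L.Chain' R →
    ∀ e ∈ wedges L, R e.1 e.2 := by
  intro L
  induction L with
  | nil => intro _ e he; simp [wedges] at he
  | cons x t ih =>
    intro h e he
    cases t with
    | nil => simp [wedges] at he
    | cons y u =>
      rcases List.isChain_cons_cons.1 h with ⟨hxy, ht⟩
      rcases List.mem_cons.1 he with h1 | h1
      · subst h1; exact hxy
      · exact ih ht e h1

lemma telescope (g : α → ℝ) : ∀ (L : List α) (x : α),
    |g ((x :: L).getLast (List.cons_ne_nil _ _)) - g x| ≤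
      ((wedges (x :: L)).map (fun e => |g e.2 - g e.1|)).sum := by
  intro L
  induction L with
  | nil => intro x; simp
  | cons y t ih =>
    intro x
    simp only [wedges_cons₂, List.map_cons, List.sum_cons]
    have h1 := ih y
    have : (x :: y :: t).getLast (List.cons_ne_nil _ _)
        = (y :: t).getLast (List.cons_ne_nil _ _) := by
      simp [List.getLast_cons]
    rw [this]
    calc |g ((y :: t).getLast (List.cons_ne_nil _ _)) - g x|
        ≤ |g ((y :: t).getLast (List.cons_ne_nil _ _)) - g y| + |g y - g x| := by
          have := abs_sub_abs_le_abs_sub (g ((y :: t).getLast (List.cons_ne_nil _ _)) - g y) (g x - g y)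
          calc |g ((y :: t).getLast (List.cons_ne_nil _ _)) - g x|
              = |(g ((y :: t).getLast (List.cons_ne_nil _ _)) - g y) + (g y - g x)| := by ring_nf
            _ ≤ _ := abs_add_le _ _
      _ ≤ |g y - g x| + ((wedges (y :: t)).map (fun e => |g e.2 - g e.1|)).sum := by
          linarith
      _ = _ := by ring



/-- Kirchhoff inequality: at every vertex outside `F`, outflow is at least
inflow plus the source mass. -/
def KH (F : Set α) (E : Finset (α × α)) (d : α × α → ℕ) (c : α → ℕ) : Prop :=
  ∀ x, x ∉ F → c x + ∑ e ∈ E.filter (fun e => e.2 = x), d e ≤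
    ∑ e ∈ E.filter (fun e => e.1 = x), d e

def GW (F : Set α) (E : Finset (α × α)) (a : α) (L : List α) : Prop :=
  L ≠ [] ∧ L.head? = some a ∧ (∀ b ∈ L.getLast?, b ∈ F) ∧
    L.Chain' (fun u v => (u, v) ∈ E)

lemma sum_filter_sub_one {β : Type*} [DecidableEq β] (s : Finset β) (f : β → ℕ) (b : β)
    (hb : b ∈ s) (h1 : 1 ≤ f b) :
    ∑ e ∈ s, (if e = b then f e - 1 else f e) = (∑ e ∈ s, f e) - 1 := by
  classical
  rw [← Finset.add_sum_erase _ (fun e => if e = b then f e - 1 else f e) hb,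
    ← Finset.add_sum_erase _ f hb]
  have h2 : ∑ e ∈ s.erase b, (if e = b then f e - 1 else f e)
      = ∑ e ∈ s.erase b, f e := by
    refine Finset.sum_congr rfl ?_
    intro e he
    have : e ≠ b := Finset.ne_of_mem_erase he
    simp [this]
  rw [h2]
  have hbb : (if b = b then f b - 1 else f b) = f b - 1 := by simp
  rw [hbb]
  omega

lemma sum_filter_unchanged {β : Type*} [DecidableEq β] (s : Finset β) (f : β → ℕ) (b : β)
    (hb : b ∉ s) :
    ∑ e ∈ s, (if e = b then f e - 1 else f e) = ∑ e ∈ s, f e := by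
  refine Finset.sum_congr rfl ?_
  intro e he
  have : e ≠ b := by rintro rfl; exact hb he
  simp [this]

lemma peel (F : Set α) (E : Finset (α × α)) (hE : ∀ e ∈ E, e.1 ≠ e.2) :
    ∀ (N : ℕ) (d : α × α → ℕ) (c : α → ℕ), (∑ e ∈ E, d e ≤ N) → KH F E d c →
    ∀ x₀, 0 < c x₀ →
    ∃ L : List α, GW F E x₀ L ∧
      ∃ d' : α × α → ℕ,
        (∀ e, d' e + (wedges L).count e ≤ d e) ∧
        KH F E d' (fun x => if x = x₀ then c x - 1 else c x) := by
  intro N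
  induction N with
  | zero =>
    intro d c hN hK x₀ hx₀
    by_cases hF : x₀ ∈ F
    · refine ⟨[x₀], ⟨by simp, by simp, by simpa using hF, List.isChain_singleton _⟩, d, ?_, ?_⟩
      · intro e; simp [wedges]
      · intro x hx
        have hne : x ≠ x₀ := by rintro rfl; exact hx hF
        simpa [hne] using hK x hx
    · exfalso
      have h := hK x₀ hF
      have hout : ∑ e ∈ E.filter (fun e => e.1 = x₀), d e = 0 := by
        have : ∑ e ∈ E.filter (fun e => e.1 = x₀), d e ≤ ∑ e ∈ E, d e :=
          Finset.sum_le_sum_of_subset (Finset.filter_subset _ _)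
        omega
      omega
  | succ N ih =>
    intro d c hN hK x₀ hx₀
    by_cases hF : x₀ ∈ F
    · refine ⟨[x₀], ⟨by simp, by simp, by simpa using hF, List.isChain_singleton _⟩, d, ?_, ?_⟩
      · intro e; simp [wedges]
      · intro x hx
        have hne : x ≠ x₀ := by rintro rfl; exact hx hF
        simpa [hne] using hK x hx
    · have h := hK x₀ hF
      have hpos : 0 < ∑ e ∈ E.filter (fun e => e.1 = x₀), d e := by omega
      obtain ⟨e₀, he₀mem, he₀pos⟩ : ∃ e₀ ∈ E.filter (fun e => e.1 = x₀), d e₀ ≠ 0 := by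
        by_contra hcon
        push_neg at hcon
        have : ∑ e ∈ E.filter (fun e => e.1 = x₀), d e = 0 :=
          Finset.sum_eq_zero hcon
        omega
      obtain ⟨u, y⟩ := e₀
      have he₀E : ((u, y) : α × α) ∈ E := (Finset.mem_filter.1 he₀mem).1
      have he₀1 : u = x₀ := by simpa using (Finset.mem_filter.1 he₀mem).2
      subst he₀1
      have hyne : y ≠ u := by
        have := hE (u, y) he₀E; simpa using fun h => this h.symm
      have hdpos : 1 ≤ d (u, y) := by omega
      have hK₁ : KH F E (fun e => if e = (u, y) then d e - 1 else d e)
          (fun x => if x = y then (if x = u then c x - 1 else c x) + 1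
            else (if x = u then c x - 1 else c x)) := by
        intro x hx
        have hKx := hK x hx
        by_cases hxx₀ : x = u
        · subst hxx₀
          have hout : ∑ e ∈ E.filter (fun e => e.1 = x), (if e = (x, y) then d e - 1 else d e)
              = (∑ e ∈ E.filter (fun e => e.1 = x), d e) - 1 :=
            sum_filter_sub_one _ d (x, y) he₀mem hdpos
          have hin : ∑ e ∈ E.filter (fun e => e.2 = x), (if e = (x, y) then d e - 1 else d e)
              = ∑ e ∈ E.filter (fun e => e.2 = x), d e := by
            refine sum_filter_unchanged _ d (x, y) ?_
            intro hmem
            have : y = x := by simpa using (Finset.mem_filter.1 hmem).2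
            exact hyne this
          beta_reduce
          rw [hout, hin, if_neg (fun hh : x = y => hyne hh.symm), if_pos rfl]
          omega
        · by_cases hxy : x = y
          · subst hxy
            have hin : ∑ e ∈ E.filter (fun e => e.2 = x), (if e = (u, x) then d e - 1 else d e)
                = (∑ e ∈ E.filter (fun e => e.2 = x), d e) - 1 :=
              sum_filter_sub_one _ d (u, x)
                (show ((u,x) : α × α) ∈ E.filter (fun e => e.2 = x) from
                  Finset.mem_filter.2 ⟨he₀E, rfl⟩) hdpos
            have hout : ∑ e ∈ E.filter (fun e => e.1 = x), (if e = (u, x) then d e - 1 else d e)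
                = ∑ e ∈ E.filter (fun e => e.1 = x), d e := by
              refine sum_filter_unchanged _ d (u, x) ?_
              intro hmem
              have : u = x := by simpa using (Finset.mem_filter.1 hmem).2
              exact hxx₀ this.symm
            have hinpos : 1 ≤ ∑ e ∈ E.filter (fun e => e.2 = x), d e := by
              have : d (u, x) ≤ ∑ e ∈ E.filter (fun e => e.2 = x), d e :=
                Finset.single_le_sum (fun _ _ => Nat.zero_le _)
                  (show ((u,x) : α × α) ∈ E.filter (fun e => e.2 = x) from
                    Finset.mem_filter.2 ⟨he₀E, rfl⟩)
              omega
            beta_reduce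
            rw [hout, hin, if_pos rfl, if_neg hxx₀]
            omega
          · have hin : ∑ e ∈ E.filter (fun e => e.2 = x), (if e = (u, y) then d e - 1 else d e)
                = ∑ e ∈ E.filter (fun e => e.2 = x), d e := by
              refine sum_filter_unchanged _ d (u, y) ?_
              intro hmem
              have : y = x := by simpa using (Finset.mem_filter.1 hmem).2
              exact hxy this.symm
            have hout : ∑ e ∈ E.filter (fun e => e.1 = x), (if e = (u, y) then d e - 1 else d e)
                = ∑ e ∈ E.filter (fun e => e.1 = x), d e := by
              refine sum_filter_unchanged _ d (u, y) ?_
              intro hmem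
              have : u = x := by simpa using (Finset.mem_filter.1 hmem).2
              exact hxx₀ this.symm
            beta_reduce
            rw [hout, hin, if_neg hxy, if_neg hxx₀]
            exact hKx
      have hsum₁ : ∑ e ∈ E, (if e = (u, y) then d e - 1 else d e) ≤ N := by
        have heq : ∑ e ∈ E, (if e = (u, y) then d e - 1 else d e) = (∑ e ∈ E, d e) - 1 :=
          sum_filter_sub_one E d (u, y) he₀E hdpos
        have : 1 ≤ ∑ e ∈ E, d e :=
          le_trans hdpos (Finset.single_le_sum (fun _ _ => Nat.zero_le _) he₀E)
        omega
      have hc₁y : 0 < (if y = y then (if y = u then c y - 1 else c y) + 1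
          else (if y = u then c y - 1 else c y)) := by simp
      obtain ⟨L', hGW', d', hcount', hK'⟩ := ih _ _ hsum₁ hK₁ y hc₁y
      obtain ⟨hne', hhead', hlast', hchain'⟩ := hGW'
      refine ⟨u :: L', ⟨by simp, by simp, ?_, ?_⟩, d', ?_, ?_⟩
      · intro b hb
        cases L' with
        | nil => exact absurd rfl hne'
        | cons z t =>
          refine hlast' b ?_
          simpa [List.getLast?_cons_cons] using hb
      · cases L' with
        | nil => exact absurd rfl hne'
        | cons z t =>
          have hz : z = y := by simpa using hhead'
          subst hz
          exact List.isChain_cons_cons.2 ⟨he₀E, hchain'⟩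
      · intro e
        cases L' with
        | nil => exact absurd rfl hne'
        | cons z t =>
          have hz : z = y := by simpa using hhead'
          subst hz
          have hw : wedges (u :: z :: t) = (u, z) :: wedges (z :: t) := rfl
          rw [hw]
          by_cases hee : e = (u, z)
          · subst hee
            have h2 := hcount' (u, z)
            rw [if_pos rfl] at h2
            simp only [List.count_cons_self]
            omega
          · have h2 := hcount' e
            simp only [if_neg hee] at h2
            rw [List.count_cons_of_ne (Ne.symm hee)]
            exact h2
      · have hfe : (fun x => if x = y then
            (if x = y then (if x = u then c x - 1 else c x) + 1
              else (if x = u then c x - 1 else c x)) - 1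
            else (if x = y then (if x = u then c x - 1 else c x) + 1
              else (if x = u then c x - 1 else c x)))
            = (fun x => if x = u then c x - 1 else c x) := by
          funext x
          by_cases hxy : x = y
          · subst hxy; simp
          · simp [hxy]
        rw [hfe] at hK'
        exact hK'


lemma decomp (F : Set α) (E : Finset (α × α)) (hE : ∀ e ∈ E, e.1 ≠ e.2) :
    ∀ (S : Finset α) (d : α × α → ℕ),
      KH F E d (fun x => if x ∈ S then 1 else 0) → (∀ a ∈ S, a ∉ F) →
    ∃ P : α → List α, (∀ a ∈ S, GW F E a (P a)) ∧
      ∀ e, (∑ a ∈ S, (wedges (P a)).count e) ≤ d e := by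
  intro S
  induction S using Finset.induction_on with
  | empty =>
    intro d _ _
    exact ⟨fun _ => [], by simp, fun e => by simp⟩
  | @insert a S ha ih =>
    intro d hK hS
    have hca : (0 : ℕ) < (if a ∈ insert a S then 1 else 0) := by simp
    obtain ⟨L, hGW, d', hcount, hK'⟩ :=
      peel F E hE (∑ e ∈ E, d e) d _ le_rfl hK a hca
    have hfe : (fun x => if x = a then (if x ∈ insert a S then 1 else 0) - 1
        else (if x ∈ insert a S then 1 else 0))
        = (fun x => if x ∈ S then (1:ℕ) else 0) := by
      funext x
      by_cases hxa : x = a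
      · subst hxa; simp [ha]
      · simp [hxa, Finset.mem_insert]
    rw [hfe] at hK'
    obtain ⟨P', hGW', hcount'⟩ := ih d' hK' (fun b hb => hS b (Finset.mem_insert_of_mem hb))
    refine ⟨fun x => if x = a then L else P' x, ?_, ?_⟩
    · intro b hb
      rcases Finset.mem_insert.1 hb with hb2 | hb2
      · subst hb2; simpa using hGW
      · have hba : b ≠ a := by rintro rfl; exact ha hb2
        simpa [hba] using hGW' b hb2
    · intro e
      rw [Finset.sum_insert ha]
      have h1 : ∑ b ∈ S, ((wedges (if b = a then L else P' b)).count e)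
          = ∑ b ∈ S, ((wedges (P' b)).count e) := by
        refine Finset.sum_congr rfl ?_
        intro b hb
        have hba : b ≠ a := by rintro rfl; exact ha hb
        simp [hba]
      have h2 := hcount e
      have h3 := hcount' e
      have h4 : ((wedges (if a = a then L else P' a)).count e) = (wedges L).count e := by
        rw [if_pos rfl]
      rw [h1, h4]
      omega

/-- Any chain can be shortened to a `Nodup` chain with the same endpoints and
edges among the original ones. -/
lemma simplify {R : α → α → Prop} :
    ∀ (L : List α), L.Chain' R →
    ∃ L' : List α, L'.Chain' R ∧ L'.head? = L.head? ∧ L'.getLast? = L.getLast? ∧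
      L'.Nodup ∧ ∀ e ∈ wedges L', e ∈ wedges L := by
  intro L
  induction L with
  | nil => exact fun _ => ⟨[], by simp [List.Chain'], rfl, rfl, by simp, by simp [wedges]⟩
  | cons x rest ih =>
    intro hch
    have hch' : rest.Chain' R := hch.tail
    obtain ⟨M, hMch, hMhead, hMlast, hMnd, hMsub⟩ := ih hch'
    by_cases hx : x ∈ M
    · -- take the suffix of M starting at x
      obtain ⟨s, t, hst⟩ := List.append_of_mem hx
      refine ⟨x :: t, ?_, ?_, ?_, ?_, ?_⟩
      · have : (s ++ x :: t).Chain' R := hst ▸ hMch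
        exact (List.isChain_append.1 this).2.1
      · simp
      · -- getLast
        have h1 : (x :: rest).getLast? = rest.getLast? := by
          cases rest with
          | nil => exfalso; rw [hst] at hMhead; simp at hMhead
          | cons y u => simp [List.getLast?_cons_cons]
        rw [h1, ← hMlast, hst]
        cases s with
        | nil => simp
        | cons w v =>
          rw [List.getLast?_append_of_ne_nil _ (by simp)]
      · have : (s ++ x :: t).Nodup := hst ▸ hMnd
        exact (List.nodup_append.1 this).2.1
      · intro e he
        have h1 : e ∈ wedges M := by
          rw [hst]; exact mem_wedges_append s he
        exact mem_wedges_cons (hMsub e h1)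
    · refine ⟨x :: M, ?_, ?_, ?_, ?_, ?_⟩
      · cases M with
        | nil => simp [List.Chain']
        | cons y u =>
          refine List.isChain_cons_cons.2 ⟨?_, hMch⟩
          cases rest with
          | nil => simp at hMhead
          | cons z w =>
            have hzy : y = z := by simpa using hMhead
            subst hzy
            exact (List.isChain_cons_cons.1 hch).1
      · simp
      · cases M with
        | nil =>
          cases rest with
          | nil => simp
          | cons z w => simp at hMhead
        | cons y u =>
          cases rest with
          | nil => simp at hMhead
          | cons z w =>
            rw [List.getLast?_cons_cons, hMlast, List.getLast?_cons_cons]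
      · exact List.nodup_cons.2 ⟨hx, hMnd⟩
      · intro e he
        cases M with
        | nil => simp [wedges] at he
        | cons y u =>
          rcases List.mem_cons.1 he with h1 | h1
          · subst h1
            cases rest with
            | nil => simp at hMhead
            | cons z w =>
              have hzy : y = z := by simpa using hMhead
              subst hzy
              exact List.mem_cons_self
          · exact mem_wedges_cons (hMsub e h1)


lemma sum_ite_wedges (E : Finset (α × α)) (L : List α)
    (hnd : (wedges L).Nodup) (hsub : ∀ e ∈ wedges L, e ∈ E) (v : α × α → ℝ) :
    ∑ e ∈ E, (if e ∈ wedges L then v e else 0) = ((wedges L).map v).sum := by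
  have h2 : ∑ e ∈ E, (if e ∈ wedges L then v e else 0)
      = ∑ e ∈ E, (if e ∈ (wedges L).toFinset then v e else 0) := by
    refine Finset.sum_congr rfl ?_
    intro e _
    simp
  rw [h2, Finset.sum_ite_mem]
  have h3 : E ∩ (wedges L).toFinset = (wedges L).toFinset := by
    apply Finset.inter_eq_right.2
    intro e he
    exact hsub e (List.mem_toFinset.1 he)
  rw [h3, List.sum_toFinset v hnd]

lemma getLast?_cons_ne_nil {L : List α} (x : α) (h : L ≠ []) :
    (x :: L).getLast? = L.getLast? := by
  cases L with
  | nil => exact absurd rfl h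
  | cons a t => simp [List.getLast?_cons_cons]

end Decomp

open Finset

open Finset

/-- dyadic scale -/
def sc (j : ℕ) : ℝ := (1/2)^j

lemma sc_pos (j : ℕ) : 0 < sc j := by unfold sc; positivity

lemma sc_succ (j : ℕ) : sc (j+1) = sc j / 2 := by
  simp [sc, pow_succ]; ring

lemma sc_anti {i j : ℕ} (h : i ≤ j) : sc j ≤ sc i := by
  apply pow_le_pow_of_le_one (by norm_num) (by norm_num) h

lemma sc_le_one (j : ℕ) : sc j ≤ 1 := by
  simpa [sc] using sc_anti (Nat.zero_le j)

/-- clamp to `[a,b]` -/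
def CL (a b t : ℝ) : ℝ := max a (min t b)

lemma CL_mono (a b : ℝ) {u v : ℝ} (h : u ≤ v) : CL a b u ≤ CL a b v :=
  max_le_max le_rfl (min_le_min h le_rfl)

lemma CL_le_of_le (a b : ℝ) {u v : ℝ} (h : u ≤ v) : CL a b u - CL a b v ≤ 0 :=
  sub_nonpos.2 (CL_mono a b h)

lemma CL_lip (a b u v : ℝ) : |CL a b u - CL a b v| ≤ |u - v| := by
  have h1 : CL a b u - CL a b v ≤ |u - v| := by
    unfold CL
    rcases abs_cases (u - v) with ⟨h4, h5⟩ | ⟨h4, h5⟩ <;>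
      simp only [min_def, max_def] <;> split_ifs <;> linarith
  have h2 : CL a b v - CL a b u ≤ |u - v| := by
    unfold CL
    rcases abs_cases (u - v) with ⟨h4, h5⟩ | ⟨h4, h5⟩ <;>
      simp only [min_def, max_def] <;> split_ifs <;> linarith
  rw [abs_sub_le_iff]
  exact ⟨h1, h2⟩

lemma CL_bdd_below (a b t : ℝ) : a ≤ CL a b t := le_max_left _ _

lemma CL_bdd_above {a b : ℝ} (h : a ≤ b) (t : ℝ) : CL a b t ≤ b :=
  max_le h (min_le_right _ _)

lemma CL_of_le {a b t : ℝ} (h : t ≤ a) (hab : a ≤ b) : CL a b t = a := by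
  unfold CL
  rw [min_eq_left (le_trans h hab), max_eq_left h]

lemma CL_of_ge {a b t : ℝ} (h : b ≤ t) (hab : a ≤ b) : CL a b t = b := by
  unfold CL
  rw [min_eq_right h, max_eq_right hab]

lemma CL_pair {a b c : ℝ} (hab : a ≤ b) (hbc : b ≤ c) (t : ℝ) :
    CL a b t + CL b c t = CL a c t + b := by
  unfold CL
  simp only [min_def, max_def]
  split_ifs <;> linarith

/-- dyadic clamp -/
def cl (j : ℕ) (t : ℝ) : ℝ := CL (sc (j+1)) (sc j) t

lemma sc_succ_le (j : ℕ) : sc (j+1) ≤ sc j := sc_anti (Nat.le_succ j)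

lemma cl_mono (j : ℕ) {u v : ℝ} (h : u ≤ v) : cl j u ≤ cl j v := CL_mono _ _ h

lemma cl_lip (j : ℕ) (u v : ℝ) : |cl j u - cl j v| ≤ |u - v| := CL_lip _ _ _ _

lemma cl_width (j : ℕ) (u v : ℝ) : |cl j u - cl j v| ≤ sc (j+1) := by
  have h1 : cl j u ≤ sc j := CL_bdd_above (sc_succ_le j) u
  have h2 : cl j v ≤ sc j := CL_bdd_above (sc_succ_le j) v
  have h3 : sc (j+1) ≤ cl j u := CL_bdd_below _ _ _
  have h4 : sc (j+1) ≤ cl j v := CL_bdd_below _ _ _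
  rw [abs_le]
  constructor <;> [linarith [sc_succ j]; linarith [sc_succ j]]

lemma cl_zero_of_ge (j : ℕ) {u v : ℝ} (hu : sc j ≤ u) (hv : sc j ≤ v) :
    cl j u - cl j v = 0 := by
  unfold cl
  rw [CL_of_ge hu (sc_succ_le j), CL_of_ge hv (sc_succ_le j), sub_self]

/-- sum of dyadic clamps telescopes -/
lemma sum_cl_le (J : ℕ) (u v : ℝ) (huv : v ≤ u) :
    ∑ j ∈ Icc 2 J, (cl j u - cl j v)
      ≤ CL (sc (J+1)) (sc 2) u - CL (sc (J+1)) (sc 2) v := by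
  induction J with
  | zero =>
    simp only [show Icc 2 0 = (∅ : Finset ℕ) by rfl, sum_empty]
    have := CL_mono (sc 1) (sc 2) huv
    have h := CL_mono (sc (0+1)) (sc 2) huv
    linarith
  | succ J ih =>
    by_cases hJ : 2 ≤ J + 1
    · rw [Finset.sum_Icc_succ_top hJ]
      have hs1 : sc (J+2) ≤ sc (J+1) := sc_succ_le _
      have hs2 : sc (J+1) ≤ sc 2 := sc_anti (by omega)
      have hpu := CL_pair hs1 hs2 u
      have hpv := CL_pair hs1 hs2 v
      have : cl (J+1) u - cl (J+1) v
          = (CL (sc (J+2)) (sc 2) u - CL (sc (J+1)) (sc 2) u)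
            - (CL (sc (J+2)) (sc 2) v - CL (sc (J+1)) (sc 2) v) := by
        unfold cl
        linarith
      rw [this]
      linarith [ih]
    · have hJ0 : J = 0 := by omega
      subst hJ0
      simp only [show Icc 2 1 = (∅ : Finset ℕ) by rfl, sum_empty]
      have h := CL_mono (sc (1+1)) (sc 2) huv
      linarith

lemma sum_abs_cl (J : ℕ) (u v : ℝ) :
    ∑ j ∈ Icc 2 J, |cl j u - cl j v| ≤ |u - v| := by
  rcases le_total v u with h | h
  · have h1 : ∀ j ∈ Icc 2 J, |cl j u - cl j v| = cl j u - cl j v := by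
      intro j _; rw [abs_of_nonneg (sub_nonneg.2 (cl_mono j h))]
    rw [Finset.sum_congr rfl h1]
    have h2 := sum_cl_le J u v h
    have h3 := CL_lip (sc (J+1)) (sc 2) u v
    rw [abs_le] at h3
    linarith [h3.2]
  · have h1 : ∀ j ∈ Icc 2 J, |cl j u - cl j v| = cl j v - cl j u := by
      intro j _; rw [abs_sub_comm, abs_of_nonneg (sub_nonneg.2 (cl_mono j h))]
    rw [Finset.sum_congr rfl h1]
    have h2 := sum_cl_le J v u h
    have h3 := CL_lip (sc (J+1)) (sc 2) v u
    rw [abs_le] at h3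
    have h4 : |v - u| = |u - v| := abs_sub_comm _ _
    linarith [h3.2]

/-- geometric tail bound -/
lemma geom_tail (T : Finset ℕ) (j₀ : ℕ) (hT : ∀ j ∈ T, j₀ ≤ j) (r : ℝ)
    (h0 : 0 ≤ r) (h2 : r ≤ 1/2) : ∑ j ∈ T, r^j ≤ 2 * r^j₀ := by
  rcases T.eq_empty_or_nonempty with hE | hne
  · subst hE; simp; positivity
  · set B := T.max' hne with hB
    have hsub : T ⊆ Icc j₀ B := by
      intro j hj
      exact Finset.mem_Icc.2 ⟨hT j hj, Finset.le_max' T j hj⟩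
    have h3 : ∑ j ∈ T, r^j ≤ ∑ j ∈ Icc j₀ B, r^j :=
      Finset.sum_le_sum_of_subset_of_nonneg hsub (fun j _ _ => by positivity)
    have h4 : ∑ j ∈ Icc j₀ B, r^j = r^j₀ * ∑ i ∈ range (B + 1 - j₀), r^i := by
      rw [← Finset.Ico_add_one_right_eq_Icc, Finset.sum_Ico_eq_sum_range]
      rw [Finset.mul_sum]
      refine Finset.sum_congr rfl ?_
      intro i _
      rw [pow_add]
    have h5 : ∑ i ∈ range (B + 1 - j₀), r^i ≤ 2 := by
      have hr1 : r ≠ 1 := by linarith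
      rw [geom_sum_eq hr1]
      rw [div_le_iff_of_neg (by linarith)]
      have : (0:ℝ) ≤ r ^ (B + 1 - j₀) := by positivity
      linarith
    calc ∑ j ∈ T, r^j ≤ r^j₀ * ∑ i ∈ range (B + 1 - j₀), r^i := h4 ▸ h3
      _ ≤ r^j₀ * 2 := by
          apply mul_le_mul_of_nonneg_left h5 (by positivity)
      _ = 2 * r^j₀ := by ring


lemma term_a_bound (m k : ℕ) (hm : 2 ≤ m) (D ℓ : ℝ) (hD : 0 < D) (hl : 0 ≤ ℓ)
    (Fa : Finset ℕ) (hfine : ∀ j ∈ Fa, (k:ℝ) * sc j ≤ D) (hsc : ∀ j ∈ Fa, sc (j+1) ≤ ℓ) :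
    ∑ j ∈ Fa, ((k:ℝ) * sc j)^(m-1) * sc (j+1) ≤ 2 * D^(m-1) * ℓ := by
  rcases Fa.eq_empty_or_nonempty with hE | hne
  · subst hE; simp; positivity
  · set j₀ := Fa.min' hne with hj₀
    have hj₀mem : j₀ ∈ Fa := Fa.min'_mem hne
    have hterm : ∀ j ∈ Fa, ((k:ℝ) * sc j)^(m-1) * sc (j+1)
        = ((k:ℝ)^(m-1)/2) * ((1/2 : ℝ)^m)^j := by
      intro j _
      have h1 : ((k:ℝ) * sc j)^(m-1) = (k:ℝ)^(m-1) * (sc j)^(m-1) := mul_pow _ _ _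
      have h2 : sc (j+1) = sc j / 2 := sc_succ j
      have h3 : (sc j)^(m-1) * sc j = (sc j)^m := by
        rw [← pow_succ]
        congr 1
        omega
      have h4 : (sc j)^m = ((1/2 : ℝ)^m)^j := by
        rw [sc, ← pow_mul, ← pow_mul, Nat.mul_comm]
      rw [h1, h2, ← h4, ← h3]
      ring
    rw [Finset.sum_congr rfl hterm, ← Finset.mul_sum]
    have hgeom : ∑ j ∈ Fa, ((1/2 : ℝ)^m)^j ≤ 2 * ((1/2 : ℝ)^m)^j₀ := by
      refine geom_tail Fa j₀ (fun j hj => Fa.min'_le j hj) _ (by positivity) ?_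
      calc ((1:ℝ)/2)^m ≤ (1/2)^1 := by
            apply pow_le_pow_of_le_one (by norm_num) (by norm_num) (by omega)
        _ = 1/2 := pow_one _
    have hknn : (0:ℝ) ≤ (k:ℝ)^(m-1)/2 := by positivity
    calc ((k:ℝ)^(m-1)/2) * ∑ j ∈ Fa, ((1/2 : ℝ)^m)^j
        ≤ ((k:ℝ)^(m-1)/2) * (2 * ((1/2 : ℝ)^m)^j₀) := by
          exact mul_le_mul_of_nonneg_left hgeom hknn
      _ = ((k:ℝ) * sc j₀)^(m-1) * sc j₀ := by
          rw [mul_pow]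
          have h4 : (sc j₀)^m = ((1/2 : ℝ)^m)^j₀ := by
            rw [sc, ← pow_mul, ← pow_mul, Nat.mul_comm]
          have h3 : (sc j₀)^(m-1) * sc j₀ = (sc j₀)^m := by
            rw [← pow_succ]; congr 1; omega
          rw [← h4, ← h3]; ring
      _ ≤ D^(m-1) * (2 * ℓ) := by
          have h5 : ((k:ℝ) * sc j₀)^(m-1) ≤ D^(m-1) := by
            apply pow_le_pow_left₀ (mul_nonneg (Nat.cast_nonneg k) (le_of_lt (sc_pos j₀))) (hfine j₀ hj₀mem)
          have h6 : sc j₀ ≤ 2 * ℓ := by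
            have := hsc j₀ hj₀mem
            have h7 : sc (j₀+1) = sc j₀ / 2 := sc_succ j₀
            linarith
          apply mul_le_mul h5 h6 (le_of_lt (sc_pos j₀)) (by positivity)
      _ = 2 * D^(m-1) * ℓ := by ring

lemma term_b_bound (m k : ℕ) (hm : 2 ≤ m) (D : ℝ) (hD : 0 < D)
    (Fb : Finset ℕ) (hfine : ∀ j ∈ Fb, (k:ℝ) * sc j ≤ D) :
    ∑ j ∈ Fb, ((k:ℝ) * sc j)^(m-1) ≤ 2 * D^(m-1) := by
  rcases Fb.eq_empty_or_nonempty with hE | hne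
  · subst hE; simp; positivity
  · set j₀ := Fb.min' hne with hj₀
    have hj₀mem : j₀ ∈ Fb := Fb.min'_mem hne
    have hterm : ∀ j ∈ Fb, ((k:ℝ) * sc j)^(m-1)
        = (k:ℝ)^(m-1) * ((1/2 : ℝ)^(m-1))^j := by
      intro j _
      rw [mul_pow, sc, ← pow_mul, ← pow_mul, Nat.mul_comm]
    rw [Finset.sum_congr rfl hterm, ← Finset.mul_sum]
    have hgeom : ∑ j ∈ Fb, ((1/2 : ℝ)^(m-1))^j ≤ 2 * ((1/2 : ℝ)^(m-1))^j₀ := by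
      refine geom_tail Fb j₀ (fun j hj => Fb.min'_le j hj) _ (by positivity) ?_
      calc ((1:ℝ)/2)^(m-1) ≤ (1/2)^1 := by
            apply pow_le_pow_of_le_one (by norm_num) (by norm_num) (by omega)
        _ = 1/2 := pow_one _
    calc (k:ℝ)^(m-1) * ∑ j ∈ Fb, ((1/2 : ℝ)^(m-1))^j
        ≤ (k:ℝ)^(m-1) * (2 * ((1/2 : ℝ)^(m-1))^j₀) := by
          apply mul_le_mul_of_nonneg_left hgeom (by positivity)
      _ = 2 * ((k:ℝ) * sc j₀)^(m-1) := by
          rw [mul_pow, sc, ← pow_mul, ← pow_mul, Nat.mul_comm]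
          ring
      _ ≤ 2 * D^(m-1) := by
          have h5 : ((k:ℝ) * sc j₀)^(m-1) ≤ D^(m-1) := by
            apply pow_le_pow_left₀ (mul_nonneg (Nat.cast_nonneg k) (le_of_lt (sc_pos j₀))) (hfine j₀ hj₀mem)
          linarith

/-- The key per-edge inequality. -/
lemma per_edge (m k J : ℕ) (hm : 2 ≤ m) (hk : 1 ≤ k)
    (dd : ℕ) (hd : 1 ≤ dd) (ℓ : ℝ) (hℓ : 0 ≤ ℓ) (x : ℕ → ℝ)
    (hx0 : ∀ j ∈ Icc 2 J, 0 ≤ x j)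
    (hxT : ∀ j ∈ Icc 2 J, x j ≤ 2*(4*(k:ℝ)*sc j)^m * min ℓ (sc (j+1)))
    (hxs : ∑ j ∈ Icc 2 J, x j ≤ (dd:ℝ) * ℓ) :
    ∑ j ∈ Icc 2 J, ((k:ℝ) * sc j)⁻¹ * x j
      ≤ (8*4^m + 1) * (dd:ℝ)^(1 - 1/(m:ℝ)) * ℓ := by
  have hm0 : (m:ℝ) ≠ 0 := by positivity
  have hdd0 : (0:ℝ) < (dd:ℝ) := by exact_mod_cast hd
  set D := (dd:ℝ)^((1:ℝ)/m) with hD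
  have hDpos : 0 < D := Real.rpow_pos_of_pos hdd0 _
  have hDalpha : D^(m-1) = (dd:ℝ)^(1 - 1/(m:ℝ)) := by
    rw [hD, ← Real.rpow_natCast ((dd:ℝ)^((1:ℝ)/m)) (m-1), ← Real.rpow_mul (le_of_lt hdd0)]
    congr 1
    have : ((m-1 : ℕ) : ℝ) = (m:ℝ) - 1 := by
      have : 1 ≤ m := by omega
      push_cast [this]
      ring
    rw [this]
    field_simp
  have hDdd : D⁻¹ * (dd:ℝ) = (dd:ℝ)^(1 - 1/(m:ℝ)) := by
    rw [hD, ← Real.rpow_neg_one ((dd:ℝ)^((1:ℝ)/m)), ← Real.rpow_mul (le_of_lt hdd0)]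
    nth_rewrite 2 [show (dd:ℝ) = (dd:ℝ)^(1:ℝ) from (Real.rpow_one _).symm]
    rw [← Real.rpow_add hdd0]
    congr 1
    field_simp
    ring
  -- split into fine and coarse scales
  rw [← Finset.sum_filter_add_sum_filter_not (Icc 2 J) (fun j => (k:ℝ) * sc j ≤ D)]
  have hcoarse : ∑ j ∈ (Icc 2 J).filter (fun j => ¬((k:ℝ) * sc j ≤ D)), ((k:ℝ) * sc j)⁻¹ * x j
      ≤ (dd:ℝ)^(1 - 1/(m:ℝ)) * ℓ := by
    have h1 : ∀ j ∈ (Icc 2 J).filter (fun j => ¬((k:ℝ) * sc j ≤ D)),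
        ((k:ℝ) * sc j)⁻¹ * x j ≤ D⁻¹ * x j := by
      intro j hj
      rcases Finset.mem_filter.1 hj with ⟨hj1, hj2⟩
      push_neg at hj2
      have hx := hx0 j hj1
      apply mul_le_mul_of_nonneg_right ?_ hx
      apply inv_anti₀ hDpos (le_of_lt hj2)
    calc ∑ j ∈ (Icc 2 J).filter (fun j => ¬((k:ℝ) * sc j ≤ D)), ((k:ℝ) * sc j)⁻¹ * x j
        ≤ ∑ j ∈ (Icc 2 J).filter (fun j => ¬((k:ℝ) * sc j ≤ D)), D⁻¹ * x j :=
          Finset.sum_le_sum h1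
      _ = D⁻¹ * ∑ j ∈ (Icc 2 J).filter (fun j => ¬((k:ℝ) * sc j ≤ D)), x j := by
          rw [Finset.mul_sum]
      _ ≤ D⁻¹ * ((dd:ℝ) * ℓ) := by
          apply mul_le_mul_of_nonneg_left ?_ (le_of_lt (inv_pos.2 hDpos))
          refine le_trans ?_ hxs
          apply Finset.sum_le_sum_of_subset_of_nonneg (Finset.filter_subset _ _)
          intro j hj _
          exact hx0 j hj
      _ = (dd:ℝ)^(1 - 1/(m:ℝ)) * ℓ := by rw [← mul_assoc, hDdd]
  have hfine : ∑ j ∈ (Icc 2 J).filter (fun j => (k:ℝ) * sc j ≤ D), ((k:ℝ) * sc j)⁻¹ * x j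
      ≤ 8*4^m * ((dd:ℝ)^(1 - 1/(m:ℝ)) * ℓ) := by
    set Fn := (Icc 2 J).filter (fun j => (k:ℝ) * sc j ≤ D) with hFn
    have h1 : ∀ j ∈ Fn, ((k:ℝ) * sc j)⁻¹ * x j
        ≤ 2*4^m * (((k:ℝ) * sc j)^(m-1) * min ℓ (sc (j+1))) := by
      intro j hj
      rcases Finset.mem_filter.1 hj with ⟨hj1, hj2⟩
      have hks : (0:ℝ) < (k:ℝ) * sc j := by
        have := sc_pos j
        have hk' : (0:ℝ) < (k:ℝ) := by exact_mod_cast hk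
        positivity
      have h2 : ((k:ℝ) * sc j)⁻¹ * x j
          ≤ ((k:ℝ) * sc j)⁻¹ * (2*(4*(k:ℝ)*sc j)^m * min ℓ (sc (j+1))) := by
        apply mul_le_mul_of_nonneg_left (hxT j hj1) (le_of_lt (inv_pos.2 hks))
      refine h2.trans (le_of_eq ?_)
      have h3 : (4*(k:ℝ)*sc j)^m = 4^m * ((k:ℝ)*sc j)^m := by
        rw [← mul_pow]; ring_nf
      have h4 : ((k:ℝ)*sc j)^m = ((k:ℝ)*sc j)^(m-1) * ((k:ℝ)*sc j) := by
        rw [← pow_succ]; congr 1; omega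
      rw [h3, h4]
      field_simp [(sc_pos j).ne']
    calc ∑ j ∈ Fn, ((k:ℝ) * sc j)⁻¹ * x j
        ≤ ∑ j ∈ Fn, 2*4^m * (((k:ℝ) * sc j)^(m-1) * min ℓ (sc (j+1))) :=
          Finset.sum_le_sum h1
      _ = 2*4^m * ∑ j ∈ Fn, ((k:ℝ) * sc j)^(m-1) * min ℓ (sc (j+1)) := by
          rw [Finset.mul_sum]
      _ ≤ 2*4^m * (4 * ((dd:ℝ)^(1 - 1/(m:ℝ)) * ℓ)) := by
          apply mul_le_mul_of_nonneg_left ?_ (by positivity)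
          rw [← Finset.sum_filter_add_sum_filter_not Fn (fun j => sc (j+1) ≤ ℓ)]
          have hA : ∑ j ∈ Fn.filter (fun j => sc (j+1) ≤ ℓ),
              ((k:ℝ) * sc j)^(m-1) * min ℓ (sc (j+1)) ≤ 2 * D^(m-1) * ℓ := by
            have heq : ∀ j ∈ Fn.filter (fun j => sc (j+1) ≤ ℓ),
                ((k:ℝ) * sc j)^(m-1) * min ℓ (sc (j+1))
                  = ((k:ℝ) * sc j)^(m-1) * sc (j+1) := by
              intro j hj
              rcases Finset.mem_filter.1 hj with ⟨_, hj2⟩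
              rw [min_eq_right hj2]
            rw [Finset.sum_congr rfl heq]
            apply term_a_bound m k hm D ℓ hDpos hℓ
            · intro j hj
              exact (Finset.mem_filter.1 ((Finset.filter_subset _ _) hj)).2
            · intro j hj
              exact (Finset.mem_filter.1 hj).2
          have hB : ∑ j ∈ Fn.filter (fun j => ¬(sc (j+1) ≤ ℓ)),
              ((k:ℝ) * sc j)^(m-1) * min ℓ (sc (j+1)) ≤ 2 * D^(m-1) * ℓ := by
            have heq : ∀ j ∈ Fn.filter (fun j => ¬(sc (j+1) ≤ ℓ)),
                ((k:ℝ) * sc j)^(m-1) * min ℓ (sc (j+1))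
                  = ((k:ℝ) * sc j)^(m-1) * ℓ := by
              intro j hj
              rcases Finset.mem_filter.1 hj with ⟨_, hj2⟩
              push_neg at hj2
              rw [min_eq_left (le_of_lt hj2)]
            rw [Finset.sum_congr rfl heq, ← Finset.sum_mul]
            have := term_b_bound m k hm D hDpos (Fn.filter (fun j => ¬(sc (j+1) ≤ ℓ)))
              (fun j hj => (Finset.mem_filter.1 ((Finset.filter_subset _ _) hj)).2)
            exact mul_le_mul_of_nonneg_right this hℓ
          rw [← hDalpha]
          linarith
      _ = 8*4^m * ((dd:ℝ)^(1 - 1/(m:ℝ)) * ℓ) := by ring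
  linarith


section Geo
variable {m : ℕ}

variable {m : ℕ}

lemma coord_le_norm (x : Pt m) (j : Fin m) : |x j| ≤ ‖x‖ := by
  have h1 : ‖x‖ = Real.sqrt (∑ i, (x i)^2) := by
    rw [EuclideanSpace.norm_eq]
    congr 1
    refine Finset.sum_congr rfl ?_
    intro i _
    rw [Real.norm_eq_abs, sq_abs]
  rw [h1, show |x j| = Real.sqrt ((x j)^2) from (Real.sqrt_sq_eq_abs _).symm]
  apply Real.sqrt_le_sqrt
  exact Finset.single_le_sum (fun i _ => sq_nonneg (x i)) (Finset.mem_univ j)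

lemma isOpen_unitCube : IsOpen (unitCube m) := by
  have : unitCube m = ⋂ j : Fin m, (fun x : Pt m => x j) ⁻¹' (Set.Ioo 0 1) := by
    ext x; simp [unitCube, Set.mem_iInter]
  rw [this]
  apply isOpen_iInter_of_finite
  intro j
  exact (EuclideanSpace.proj j).continuous.isOpen_preimage _ isOpen_Ioo

lemma closure_unitCube_subset : closure (unitCube m) ⊆ {x : Pt m | ∀ j, x j ∈ Set.Icc (0:ℝ) 1} := by
  apply closure_minimal
  · intro x hx j
    exact ⟨le_of_lt (hx j).1, le_of_lt (hx j).2⟩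
  · have : {x : Pt m | ∀ j, x j ∈ Set.Icc (0:ℝ) 1}
        = ⋂ j : Fin m, (fun x : Pt m => x j) ⁻¹' (Set.Icc 0 1) := by
      ext x; simp [Set.mem_iInter]
    rw [this]
    apply isClosed_iInter
    intro j
    exact IsClosed.preimage (EuclideanSpace.proj j).continuous isClosed_Icc

lemma frontier_coords {b : Pt m} (hb : b ∈ frontier (unitCube m)) :
    (∀ j, b j ∈ Set.Icc (0:ℝ) 1) ∧ ∃ j, b j = 0 ∨ b j = 1 := by
  have h1 : b ∈ closure (unitCube m) := hb.1
  have h2 : b ∉ unitCube m := by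
    intro hmem
    exact hb.2 (by rwa [isOpen_unitCube.interior_eq])
  have h3 := closure_unitCube_subset h1
  refine ⟨h3, ?_⟩
  by_contra hcon
  push_neg at hcon
  apply h2
  intro j
  rcases h3 j with ⟨hj0, hj1⟩
  rcases hcon j with ⟨hne0, hne1⟩
  exact ⟨lt_of_le_of_ne hj0 (Ne.symm hne0), lt_of_le_of_ne hj1 hne1⟩

lemma mem_unitCube_not_frontier {a : Pt m} (ha : a ∈ unitCube m) :
    a ∉ frontier (unitCube m) := by
  intro h
  exact h.2 (by rwa [isOpen_unitCube.interior_eq])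

/-- the grid map -/
def gmap (m k : ℕ) : (Fin m → ℕ) → Pt m :=
  fun I => (WithLp.equiv 2 (Fin m → ℝ)).symm fun j => (I j : ℝ) / k

lemma gmap_apply (k : ℕ) (I : Fin m → ℕ) (j : Fin m) : gmap m k I j = (I j : ℝ) / k := rfl

lemma gmap_injOn (k : ℕ) (hk : 1 ≤ k) : Function.Injective (gmap m k) := by
  intro I I' h
  funext j
  have h1 : (I j : ℝ) / k = (I' j : ℝ) / k := by
    rw [← gmap_apply k I j, ← gmap_apply k I' j, h]
  have hk0 : (k:ℝ) ≠ 0 := by positivity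
  field_simp at h1
  exact_mod_cast h1

lemma gridA_eq : gridA m k = (Fintype.piFinset fun _ : Fin m => Finset.Icc 1 k).image (gmap m k) := rfl

lemma count_interval (k : ℕ) (hk : 1 ≤ k) (c s : ℝ) (hs : 1 ≤ (k:ℝ)*s) :
    (((Finset.Icc 1 k).filter (fun n : ℕ => |(n:ℝ)/k - c| < s)).card : ℝ) ≤ 4*(k:ℝ)*s := by
  set T := (Finset.Icc 1 k).filter (fun n : ℕ => |(n:ℝ)/k - c| < s) with hT
  rcases T.eq_empty_or_nonempty with hE | hne
  · rw [hE]; simp; linarith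
  · set n₀ := T.min' hne with hn₀
    set n₁ := T.max' hne with hn₁
    have hsub : T ⊆ Finset.Icc n₀ n₁ := by
      intro n hn
      exact Finset.mem_Icc.2 ⟨T.min'_le n hn, T.le_max' n hn⟩
    have hcard : T.card ≤ n₁ + 1 - n₀ := by
      calc T.card ≤ (Finset.Icc n₀ n₁).card := Finset.card_le_card hsub
        _ = n₁ + 1 - n₀ := Nat.card_Icc _ _
    have hle : n₀ ≤ n₁ := T.min'_le _ (T.max'_mem hne)
    have hcardR : (T.card : ℝ) ≤ (n₁:ℝ) - (n₀:ℝ) + 1 := by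
      have h2 : ((n₁ + 1 - n₀ : ℕ) : ℝ) = (n₁:ℝ) - (n₀:ℝ) + 1 := by
        have : n₀ ≤ n₁ + 1 := by omega
        push_cast [Nat.cast_sub this]
        ring
      calc (T.card : ℝ) ≤ ((n₁ + 1 - n₀ : ℕ) : ℝ) := by exact_mod_cast hcard
        _ = _ := h2
    have hk0 : (0:ℝ) < (k:ℝ) := by exact_mod_cast hk
    have h0 := (Finset.mem_filter.1 (T.min'_mem hne)).2
    have h1 := (Finset.mem_filter.1 (T.max'_mem hne)).2
    rw [abs_lt] at h0 h1
    have hdiff : (n₁:ℝ) - (n₀:ℝ) < 2*(k:ℝ)*s := by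
      have e0 : (n₀:ℝ)/k > c - s := by linarith [h0.1]
      have e1 : (n₁:ℝ)/k < c + s := by linarith [h1.2]
      have : (n₁:ℝ)/k - (n₀:ℝ)/k < 2*s := by linarith
      have h3 : (n₁:ℝ) - (n₀:ℝ) = ((n₁:ℝ)/k - (n₀:ℝ)/k) * k := by field_simp
      rw [h3]
      calc ((n₁:ℝ)/k - (n₀:ℝ)/k) * k < (2*s) * k := by
            apply mul_lt_mul_of_pos_right this hk0
        _ = 2*(k:ℝ)*s := by ring
    linarith

/-- counting grid points in a ball -/
lemma grid_count (k : ℕ) (hk : 1 ≤ k) (p : Pt m) (s : ℝ) (hs : 1 ≤ (k:ℝ) * s) :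
    (((gridA m k).filter (fun a => ‖p - a‖ < s)).card : ℝ) ≤ (4*(k:ℝ)*s)^m := by
  set t : Fin m → Finset ℕ :=
    fun j => (Finset.Icc 1 k).filter (fun n : ℕ => |(n:ℝ)/k - p j| < s) with ht
  have hsub : (gridA m k).filter (fun a => ‖p - a‖ < s)
      ⊆ (Fintype.piFinset t).image (gmap m k) := by
    intro a ha
    rcases Finset.mem_filter.1 ha with ⟨hag, hanear⟩
    rw [gridA_eq] at hag
    rcases Finset.mem_image.1 hag with ⟨I, hI, haI⟩
    refine Finset.mem_image.2 ⟨I, ?_, haI⟩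
    rw [Fintype.mem_piFinset]
    intro j
    rw [ht]
    refine Finset.mem_filter.2 ⟨(Fintype.mem_piFinset.1 hI) j, ?_⟩
    have h1 : (I j : ℝ)/k = a j := by rw [← haI]; rfl
    have h2 : |a j - p j| ≤ ‖p - a‖ := by
      rw [← norm_neg (p - a)]
      have h3 : -(p - a) = a - p := neg_sub p a
      rw [h3]
      have := coord_le_norm (a - p) j
      simpa using this
    rw [h1]
    calc |a j - p j| ≤ ‖p - a‖ := h2
      _ < s := hanear
  have hcard1 : ((gridA m k).filter (fun a => ‖p - a‖ < s)).card
      ≤ (Fintype.piFinset t).card := by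
    calc ((gridA m k).filter (fun a => ‖p - a‖ < s)).card
        ≤ ((Fintype.piFinset t).image (gmap m k)).card := Finset.card_le_card hsub
      _ ≤ (Fintype.piFinset t).card := Finset.card_image_le
  have hcard2 : (Fintype.piFinset t).card = ∏ j : Fin m, (t j).card :=
    Fintype.card_piFinset t
  have hcardR : ((Fintype.piFinset t).card : ℝ) ≤ (4*(k:ℝ)*s)^m := by
    rw [hcard2]
    push_cast
    calc ∏ j : Fin m, ((t j).card : ℝ) ≤ ∏ _j : Fin m, (4*(k:ℝ)*s) := by
          apply Finset.prod_le_prod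
          · intro j _; positivity
          · intro j _; exact count_interval k hk (p j) s hs
      _ = (4*(k:ℝ)*s)^m := by
          rw [Finset.prod_const]
          congr 1
          simp
  calc (((gridA m k).filter (fun a => ‖p - a‖ < s)).card : ℝ)
      ≤ ((Fintype.piFinset t).card : ℝ) := by exact_mod_cast hcard1
    _ ≤ _ := hcardR


def clo (k : ℕ) : ℕ := (k+3)/4
def chi (k : ℕ) : ℕ := 3*k/4

def central (m k : ℕ) : Finset (Pt m) :=
  (Fintype.piFinset fun _ : Fin m => Finset.Icc (clo k) (chi k)).image (gmap m k)

lemma central_subset_grid (k : ℕ) (hk : 2 ≤ k) : central m k ⊆ gridA m k := by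
  rw [gridA_eq]
  apply Finset.image_subset_image
  intro I hI
  rw [Fintype.mem_piFinset] at hI ⊢
  intro j
  have := Finset.mem_Icc.1 (hI j)
  refine Finset.mem_Icc.2 ⟨?_, ?_⟩
  · have : 1 ≤ clo k := by unfold clo; omega
    omega
  · have : chi k ≤ k := by unfold chi; omega
    omega

lemma central_coords {k : ℕ} (hk : 2 ≤ k) {a : Pt m} (ha : a ∈ central m k) :
    ∀ j, (1/4 : ℝ) ≤ a j ∧ a j ≤ 3/4 := by
  rcases Finset.mem_image.1 ha with ⟨I, hI, haI⟩
  intro j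
  rw [Fintype.mem_piFinset] at hI
  rcases Finset.mem_Icc.1 (hI j) with ⟨h1, h2⟩
  have hval : a j = (I j : ℝ)/k := by rw [← haI]; rfl
  have hk0 : (0:ℝ) < (k:ℝ) := by exact_mod_cast (by omega : 0 < k)
  constructor
  · rw [hval, le_div_iff₀ hk0]
    have h3 : k ≤ 4 * clo k := by unfold clo; omega
    have h4 : clo k ≤ I j := h1
    have : (k:ℝ) ≤ 4 * (I j : ℝ) := by exact_mod_cast le_trans h3 (by omega)
    linarith
  · rw [hval, div_le_iff₀ hk0]
    have h3 : 4 * chi k ≤ 3 * k := by unfold chi; omega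
    have : 4 * (I j : ℝ) ≤ 3 * (k:ℝ) := by exact_mod_cast le_trans (by omega : 4 * I j ≤ 4 * chi k) h3
    linarith

lemma central_card (k : ℕ) (hk : 2 ≤ k) :
    ((k:ℝ)/4)^m ≤ ((central m k).card : ℝ) := by
  have hcard : (central m k).card = (chi k - clo k + 1)^m := by
    unfold central
    rw [Finset.card_image_of_injective _ (gmap_injOn k (by omega))]
    rw [Fintype.card_piFinset]
    simp only [Nat.card_Icc, Finset.prod_const, Finset.card_univ, Fintype.card_fin]
    have hswap : chi k + 1 - clo k = chi k - clo k + 1 := by unfold chi clo; omega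
    rw [hswap]
  rw [hcard]
  push_cast
  apply pow_le_pow_left₀ (by positivity)
  have h1' : k ≤ 4 * (chi k - clo k) + 4 := by unfold chi clo; omega
  have h2 : (k:ℝ) ≤ 4 * ((chi k - clo k : ℕ):ℝ) + 4 := by exact_mod_cast h1'
  linarith

lemma central_in_cube {k : ℕ} (hk : 2 ≤ k) {a : Pt m} (ha : a ∈ central m k) :
    a ∈ unitCube m := by
  intro j
  rcases central_coords hk ha j with ⟨h1, h2⟩
  constructor <;> [linarith; linarith]

lemma central_far {k : ℕ} (hk : 2 ≤ k) {a : Pt m} (ha : a ∈ central m k)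
    {b : Pt m} (hb : b ∈ frontier (unitCube m)) : (1/4 : ℝ) ≤ ‖b - a‖ := by
  rcases frontier_coords hb with ⟨hbox, j, hj⟩
  rcases central_coords hk ha j with ⟨h1, h2⟩
  have h3 : (1/4 : ℝ) ≤ |b j - a j| := by
    rcases hj with hj | hj
    · rw [hj, show (0:ℝ) - a j = -(a j) by ring, abs_neg, abs_of_nonneg (by linarith : (0:ℝ) ≤ a j)]
      linarith
    · rw [hj, abs_of_nonneg (by linarith : (0:ℝ) ≤ 1 - a j)]
      linarith
  calc (1/4 : ℝ) ≤ |b j - a j| := h3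
    _ = |(b - a) j| := by norm_num [Pi.sub_apply]
    _ ≤ ‖b - a‖ := coord_le_norm _ j


end Geo

section Assembly
variable {m : ℕ}

/-- The Kirchhoff inequality holds for a connecting graph, for any subset of sources. -/
lemma KH_of_isConn (k : ℕ) (G : BrGraph m) (hG : G.IsConn (gridA m k) (unitCube m))
    (S : Finset (Pt m)) (hS : S ⊆ gridA m k) :
    KH (frontier (unitCube m)) G.E G.d (fun x => if x ∈ S then 1 else 0) := by
  intro x hx
  by_cases hxV : x ∈ G.V
  · have heq := hG.2.2.2.2.2 x hxV hx
    have hle : (if x ∈ S then 1 else 0) ≤ (if x ∈ gridA m k then 1 else 0) := by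
      by_cases hxS : x ∈ S
      · simp [hxS, hS hxS]
      · simp [hxS]
    beta_reduce
    omega
  · have h1 : G.E.filter (fun e => e.1 = x) = ∅ := by
      refine Finset.filter_eq_empty_iff.2 ?_
      intro e he heq
      exact hxV (heq ▸ (hG.2.2.1 e he).1)
    have h2 : G.E.filter (fun e => e.2 = x) = ∅ := by
      refine Finset.filter_eq_empty_iff.2 ?_
      intro e he heq
      exact hxV (heq ▸ (hG.2.2.1 e he).2.1)
    have h3 : x ∉ S := fun hxS => hxV (hG.1 (hS hxS))
    rw [h1, h2]
    simp [h3]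

/-- Extraction of simple paths from sources to the boundary with congestion `≤ d`. -/
lemma get_paths (k : ℕ) (G : BrGraph m) (hG : G.IsConn (gridA m k) (unitCube m))
    (S : Finset (Pt m)) (hSg : S ⊆ gridA m k)
    (hSc : ∀ a ∈ S, a ∉ frontier (unitCube m)) :
    ∃ P : Pt m → List (Pt m),
      (∀ a ∈ S, (P a).head? = some a ∧
        (∀ b ∈ (P a).getLast?, b ∈ frontier (unitCube m)) ∧
        (P a).Chain' (fun u v => (u, v) ∈ G.E) ∧ (P a).Nodup ∧ (P a) ≠ []) ∧
      (∀ e, (S.filter (fun a => e ∈ wedges (P a))).card ≤ G.d e) := by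
  obtain ⟨P₀, hGW, hcount⟩ := decomp (frontier (unitCube m)) G.E
    (fun e he => (hG.2.2.1 e he).2.2) S G.d (KH_of_isConn k G hG S hSg) hSc
  have hch : ∀ a, ∃ L' : List (Pt m), (a ∈ S →
      (L'.Chain' (fun u v => (u, v) ∈ G.E) ∧ L'.head? = (P₀ a).head? ∧
       L'.getLast? = (P₀ a).getLast? ∧ L'.Nodup ∧
       ∀ e ∈ wedges L', e ∈ wedges (P₀ a))) := by
    intro a
    by_cases ha : a ∈ S
    · obtain ⟨L', h⟩ := simplify (P₀ a) (hGW a ha).2.2.2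
      exact ⟨L', fun _ => h⟩
    · exact ⟨[], fun h => absurd h ha⟩
  choose P hP using hch
  refine ⟨P, ?_, ?_⟩
  · intro a ha
    obtain ⟨h1, h2, h3, h4, h5⟩ := hP a ha
    rcases hGW a ha with ⟨hne0, hhead0, hlast0, _⟩
    have hhead : (P a).head? = some a := by rw [h2, hhead0]
    refine ⟨hhead, ?_, h1, h4, ?_⟩
    · intro b hb
      exact hlast0 b (h3 ▸ hb)
    · intro hnil
      rw [hnil] at hhead
      simp at hhead
  · intro e
    have h1 : (S.filter (fun a => e ∈ wedges (P a))).card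
        = ∑ a ∈ S, (if e ∈ wedges (P a) then 1 else 0) := Finset.card_filter _ _
    have h2 : ∀ a ∈ S, (if e ∈ wedges (P a) then 1 else 0) ≤ (wedges (P₀ a)).count e := by
      intro a ha
      by_cases hmem : e ∈ wedges (P a)
      · rw [if_pos hmem]
        exact List.count_pos_iff.2 ((hP a ha).2.2.2.2 e hmem)
      · rw [if_neg hmem]
        exact Nat.zero_le _
    calc (S.filter (fun a => e ∈ wedges (P a))).card
        = ∑ a ∈ S, (if e ∈ wedges (P a) then 1 else 0) := h1
      _ ≤ ∑ a ∈ S, (wedges (P₀ a)).count e := Finset.sum_le_sum h2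
      _ ≤ G.d e := hcount e

/-- The per-scale crossing lower bound for a single path. -/
lemma crossing (k : ℕ) (hk2 : 2 ≤ k) (G : BrGraph m)
    {a : Pt m} (haC : a ∈ central m k) {L : List (Pt m)}
    (hhead : L.head? = some a)
    (hlast : ∀ b ∈ L.getLast?, b ∈ frontier (unitCube m))
    (hchain : L.Chain' (fun u v => (u, v) ∈ G.E)) (hnd : L.Nodup)
    {j : ℕ} (hj : 2 ≤ j) :
    sc (j+1) ≤ ∑ e ∈ G.E,
      (if e ∈ wedges L then |cl j (‖e.2 - a‖) - cl j (‖e.1 - a‖)| else 0) := by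
  cases L with
  | nil => simp at hhead
  | cons x t =>
    have hx : x = a := by simpa using hhead
    subst hx
    set g : Pt m → ℝ := fun v => cl j (‖v - x‖) with hg
    have hsum : ∑ e ∈ G.E,
        (if e ∈ wedges (x :: t) then |cl j (‖e.2 - x‖) - cl j (‖e.1 - x‖)| else 0)
        = ((wedges (x :: t)).map (fun e => |g e.2 - g e.1|)).sum := by
      exact sum_ite_wedges G.E (x :: t) (nodup_wedges hnd)
        (fun e he => chain'_wedges hchain e he) _
    rw [hsum]
    refine le_trans ?_ (telescope g t x)
    have hga : g x = sc (j+1) := by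
      rw [hg]
      simp only [sub_self, norm_zero]
      exact CL_of_le (le_of_lt (sc_pos (j+1))) (sc_succ_le j)
    have hlastF : (x :: t).getLast (List.cons_ne_nil _ _) ∈ frontier (unitCube m) := by
      apply hlast
      rw [List.getLast?_eq_getLast (List.cons_ne_nil _ _)]
      simp
    have hfar : (1/4 : ℝ) ≤ ‖(x :: t).getLast (List.cons_ne_nil _ _) - x‖ :=
      central_far hk2 haC hlastF
    have hglast : g ((x :: t).getLast (List.cons_ne_nil _ _)) = sc j := by
      rw [hg]
      refine CL_of_ge ?_ (sc_succ_le j)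
      calc sc j ≤ sc 2 := sc_anti hj
        _ = 1/4 := by norm_num [sc]
        _ ≤ _ := hfar
    rw [hga, hglast]
    have h1 : sc j - sc (j+1) = sc (j+1) := by
      rw [sc_succ]; ring
    rw [abs_of_nonneg (by linarith [sc_succ_le j] : (0:ℝ) ≤ sc j - sc (j+1)), h1]

/-- Main lower bound: scales times central points. -/
lemma main_bound (k : ℕ) (hm : 2 ≤ m) (hk : 4 ≤ k) (G : BrGraph m)
    (hG : G.IsConn (gridA m k) (unitCube m)) :
    ((central m k).card : ℝ) * (((Nat.log 2 k) - 1 : ℕ) : ℝ) / (2*(k:ℝ))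
      ≤ (8*4^m + 1) * G.cost (1 - 1/(m:ℝ)) := by
  classical
  have hk2 : 2 ≤ k := by omega
  set J := Nat.log 2 k with hJ
  have hJ2 : 2 ≤ J := by
    rw [hJ]
    have := (Nat.le_log_iff_pow_le (by norm_num) (by omega : k ≠ 0)).2 (by omega : 2^2 ≤ k)
    omega
  have hks : ∀ j ∈ Icc 2 J, (1:ℝ) ≤ (k:ℝ) * sc j := by
    intro j hj
    rcases Finset.mem_Icc.1 hj with ⟨_, hjJ⟩
    have h1 : (2:ℕ)^j ≤ k := le_trans (Nat.pow_le_pow_right (by norm_num) hjJ)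
      (Nat.pow_log_le_self 2 (by omega))
    have h2 : ((2:ℝ))^j ≤ (k:ℝ) := by exact_mod_cast h1
    have h3 : (0:ℝ) ≤ (1/2:ℝ)^j := by positivity
    calc (1:ℝ) = ((2:ℝ) * (1/2))^j := by norm_num
      _ = (2:ℝ)^j * (1/2)^j := mul_pow _ _ _
      _ ≤ (k:ℝ) * (1/2)^j := mul_le_mul_of_nonneg_right h2 h3
      _ = (k:ℝ) * sc j := by rw [sc]
  -- get paths
  obtain ⟨P, hPgood, hPcount⟩ := get_paths k G hG (central m k)
    (central_subset_grid k hk2)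
    (fun a ha => mem_unitCube_not_frontier (central_in_cube hk2 ha))
  set X : ℕ → (Pt m × Pt m) → ℝ := fun j e =>
    ∑ a ∈ central m k,
      (if e ∈ wedges (P a) then |cl j (‖e.2 - a‖) - cl j (‖e.1 - a‖)| else 0) with hX
  -- lower bound per scale
  have hlow : ∀ j ∈ Icc 2 J, ((central m k).card : ℝ) * sc (j+1) ≤ ∑ e ∈ G.E, X j e := by
    intro j hj
    rcases Finset.mem_Icc.1 hj with ⟨hj2, _⟩
    have hswap : ∑ e ∈ G.E, X j e = ∑ a ∈ central m k, ∑ e ∈ G.E,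
        (if e ∈ wedges (P a) then |cl j (‖e.2 - a‖) - cl j (‖e.1 - a‖)| else 0) := by
      rw [hX]
      exact Finset.sum_comm
    rw [hswap]
    calc ((central m k).card : ℝ) * sc (j+1)
        = ∑ _a ∈ central m k, sc (j+1) := by rw [Finset.sum_const, nsmul_eq_mul]
      _ ≤ _ := by
          refine Finset.sum_le_sum ?_
          intro a ha
          obtain ⟨h1, h2, h3, h4, _⟩ := hPgood a ha
          exact crossing k hk2 G ha h1 h2 h3 h4 hj2
  -- caps per edge
  have hvc_le : ∀ (j : ℕ) (e : Pt m × Pt m) (a : Pt m),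
      |cl j (‖e.2 - a‖) - cl j (‖e.1 - a‖)| ≤ min ‖e.2 - e.1‖ (sc (j+1)) := by
    intro j e a
    refine le_min ?_ (cl_width j _ _)
    calc |cl j (‖e.2 - a‖) - cl j (‖e.1 - a‖)| ≤ |‖e.2 - a‖ - ‖e.1 - a‖| := cl_lip j _ _
      _ ≤ ‖(e.2 - a) - (e.1 - a)‖ := abs_norm_sub_norm_le _ _
      _ = ‖e.2 - e.1‖ := by rw [sub_sub_sub_cancel_right]
  have hcapT : ∀ j ∈ Icc 2 J, ∀ e ∈ G.E,
      X j e ≤ 2*(4*(k:ℝ)*sc j)^m * min ‖e.2 - e.1‖ (sc (j+1)) := by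
    intro j hj e _
    have hmin0 : 0 ≤ min ‖e.2 - e.1‖ (sc (j+1)) :=
      le_min (norm_nonneg _) (le_of_lt (sc_pos _))
    have h1 : X j e ≤ ∑ a ∈ central m k,
        (if (‖e.1 - a‖ < sc j ∨ ‖e.2 - a‖ < sc j)
          then min ‖e.2 - e.1‖ (sc (j+1)) else 0) := by
      rw [hX]
      refine Finset.sum_le_sum ?_
      intro a _
      by_cases hcond : (‖e.1 - a‖ < sc j ∨ ‖e.2 - a‖ < sc j)
      · rw [if_pos hcond]
        by_cases hmem : e ∈ wedges (P a)
        · rw [if_pos hmem]; exact hvc_le j e a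
        · rw [if_neg hmem]; exact hmin0
      · push_neg at hcond
        have hz : |cl j (‖e.2 - a‖) - cl j (‖e.1 - a‖)| = 0 := by
          rw [cl_zero_of_ge j hcond.2 hcond.1, abs_zero]
        by_cases hmem : e ∈ wedges (P a)
        · rw [if_pos hmem, hz]
          by_cases hcond2 : (‖e.1 - a‖ < sc j ∨ ‖e.2 - a‖ < sc j)
          · rw [if_pos hcond2]; exact hmin0
          · rw [if_neg hcond2]
        · rw [if_neg hmem]
          by_cases hcond2 : (‖e.1 - a‖ < sc j ∨ ‖e.2 - a‖ < sc j)
          · rw [if_pos hcond2]; exact hmin0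
          · rw [if_neg hcond2]
    have h2 : ∑ a ∈ central m k,
        (if (‖e.1 - a‖ < sc j ∨ ‖e.2 - a‖ < sc j)
          then min ‖e.2 - e.1‖ (sc (j+1)) else 0)
        = (((central m k).filter
            (fun a => ‖e.1 - a‖ < sc j ∨ ‖e.2 - a‖ < sc j)).card : ℝ)
          * min ‖e.2 - e.1‖ (sc (j+1)) := by
      rw [← Finset.sum_filter, Finset.sum_const, nsmul_eq_mul]
    have h3 : (((central m k).filter
          (fun a => ‖e.1 - a‖ < sc j ∨ ‖e.2 - a‖ < sc j)).card : ℝ)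
        ≤ 2*(4*(k:ℝ)*sc j)^m := by
      have hsplit : ((central m k).filter
            (fun a => ‖e.1 - a‖ < sc j ∨ ‖e.2 - a‖ < sc j)).card
          ≤ ((central m k).filter (fun a => ‖e.1 - a‖ < sc j)).card
            + ((central m k).filter (fun a => ‖e.2 - a‖ < sc j)).card := by
        rw [Finset.filter_or]
        exact Finset.card_union_le _ _
      have hc1 : (((central m k).filter (fun a => ‖e.1 - a‖ < sc j)).card : ℝ)
          ≤ (4*(k:ℝ)*sc j)^m := by
        calc (((central m k).filter (fun a => ‖e.1 - a‖ < sc j)).card : ℝ)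
            ≤ (((gridA m k).filter (fun a => ‖e.1 - a‖ < sc j)).card : ℝ) := by
              exact_mod_cast Finset.card_le_card
                (Finset.filter_subset_filter _ (central_subset_grid k hk2))
          _ ≤ _ := grid_count k (by omega) e.1 (sc j) (hks j hj)
      have hc2 : (((central m k).filter (fun a => ‖e.2 - a‖ < sc j)).card : ℝ)
          ≤ (4*(k:ℝ)*sc j)^m := by
        calc (((central m k).filter (fun a => ‖e.2 - a‖ < sc j)).card : ℝ)
            ≤ (((gridA m k).filter (fun a => ‖e.2 - a‖ < sc j)).card : ℝ) := by
              exact_mod_cast Finset.card_le_card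
                (Finset.filter_subset_filter _ (central_subset_grid k hk2))
          _ ≤ _ := grid_count k (by omega) e.2 (sc j) (hks j hj)
      have hsplitR : (((central m k).filter
            (fun a => ‖e.1 - a‖ < sc j ∨ ‖e.2 - a‖ < sc j)).card : ℝ)
          ≤ (((central m k).filter (fun a => ‖e.1 - a‖ < sc j)).card : ℝ)
            + (((central m k).filter (fun a => ‖e.2 - a‖ < sc j)).card : ℝ) := by
        exact_mod_cast hsplit
      linarith
    calc X j e ≤ _ := h1
      _ = _ := h2
      _ ≤ 2*(4*(k:ℝ)*sc j)^m * min ‖e.2 - e.1‖ (sc (j+1)) :=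
        mul_le_mul_of_nonneg_right h3 hmin0
  -- budget per edge
  have hbud : ∀ e ∈ G.E, ∑ j ∈ Icc 2 J, X j e ≤ (G.d e : ℝ) * ‖e.2 - e.1‖ := by
    intro e he
    have hswap : ∑ j ∈ Icc 2 J, X j e = ∑ a ∈ central m k, ∑ j ∈ Icc 2 J,
        (if e ∈ wedges (P a) then |cl j (‖e.2 - a‖) - cl j (‖e.1 - a‖)| else 0) := by
      rw [hX]
      exact Finset.sum_comm
    rw [hswap]
    have h1 : ∀ a ∈ central m k, ∑ j ∈ Icc 2 J,
        (if e ∈ wedges (P a) then |cl j (‖e.2 - a‖) - cl j (‖e.1 - a‖)| else 0)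
        ≤ (if e ∈ wedges (P a) then ‖e.2 - e.1‖ else 0) := by
      intro a _
      by_cases hmem : e ∈ wedges (P a)
      · simp only [if_pos hmem]
        calc ∑ j ∈ Icc 2 J, |cl j (‖e.2 - a‖) - cl j (‖e.1 - a‖)|
            ≤ |‖e.2 - a‖ - ‖e.1 - a‖| := sum_abs_cl J _ _
          _ ≤ ‖(e.2 - a) - (e.1 - a)‖ := abs_norm_sub_norm_le _ _
          _ = ‖e.2 - e.1‖ := by rw [sub_sub_sub_cancel_right]
      · simp only [if_neg hmem, Finset.sum_const_zero, le_refl]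
    calc ∑ a ∈ central m k, ∑ j ∈ Icc 2 J,
        (if e ∈ wedges (P a) then |cl j (‖e.2 - a‖) - cl j (‖e.1 - a‖)| else 0)
        ≤ ∑ a ∈ central m k, (if e ∈ wedges (P a) then ‖e.2 - e.1‖ else 0) :=
          Finset.sum_le_sum h1
      _ = (((central m k).filter (fun a => e ∈ wedges (P a))).card : ℝ) * ‖e.2 - e.1‖ := by
          rw [← Finset.sum_filter, Finset.sum_const, nsmul_eq_mul]
      _ ≤ (G.d e : ℝ) * ‖e.2 - e.1‖ := by
          apply mul_le_mul_of_nonneg_right ?_ (norm_nonneg _)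
          exact_mod_cast hPcount e
  -- per-edge inequality
  have hedge : ∀ e ∈ G.E, ∑ j ∈ Icc 2 J, ((k:ℝ) * sc j)⁻¹ * X j e
      ≤ (8*4^m + 1) * (G.d e : ℝ)^(1 - 1/(m:ℝ)) * ‖e.2 - e.1‖ := by
    intro e he
    refine per_edge m k J hm (by omega) (G.d e) (hG.2.2.2.2.1 e he) ‖e.2 - e.1‖
      (norm_nonneg _) (fun j => X j e) ?_ ?_ (hbud e he)
    · intro j _
      rw [hX]
      apply Finset.sum_nonneg
      intro a _
      by_cases hmem : e ∈ wedges (P a)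
      · rw [if_pos hmem]; exact abs_nonneg _
      · rw [if_neg hmem]
    · intro j hj
      exact hcapT j hj e he
  -- combine
  have hXnn : ∀ j ∈ Icc 2 J, ∀ e ∈ G.E, (0:ℝ) ≤ X j e := by
    intro j _ e _
    rw [hX]
    apply Finset.sum_nonneg
    intro a _
    by_cases hmem : e ∈ wedges (P a)
    · rw [if_pos hmem]; exact abs_nonneg _
    · rw [if_neg hmem]
  have hmain : ∑ j ∈ Icc 2 J, ((k:ℝ) * sc j)⁻¹ * ∑ e ∈ G.E, X j e
      ≤ (8*4^m + 1) * G.cost (1 - 1/(m:ℝ)) := by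
    have h1 : ∑ j ∈ Icc 2 J, ((k:ℝ) * sc j)⁻¹ * ∑ e ∈ G.E, X j e
        = ∑ e ∈ G.E, ∑ j ∈ Icc 2 J, ((k:ℝ) * sc j)⁻¹ * X j e := by
      rw [Finset.sum_comm]
      refine Finset.sum_congr rfl ?_
      intro j _
      rw [Finset.mul_sum]
    rw [h1]
    unfold BrGraph.cost
    rw [Finset.mul_sum]
    refine Finset.sum_le_sum ?_
    intro e he
    calc ∑ j ∈ Icc 2 J, ((k:ℝ) * sc j)⁻¹ * X j e
        ≤ (8*4^m + 1) * (G.d e : ℝ)^(1 - 1/(m:ℝ)) * ‖e.2 - e.1‖ := hedge e he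
      _ = (8*4^m + 1) * ((G.d e : ℝ)^(1 - 1/(m:ℝ)) * ‖e.2 - e.1‖) := by ring
  have hfinal : ((central m k).card : ℝ) * (((Icc 2 J).card : ℕ) : ℝ) / (2*(k:ℝ))
      ≤ ∑ j ∈ Icc 2 J, ((k:ℝ) * sc j)⁻¹ * ∑ e ∈ G.E, X j e := by
    have hk0 : (0:ℝ) < (k:ℝ) := by exact_mod_cast (by omega : 0 < k)
    have h1 : ∀ j ∈ Icc 2 J, ((central m k).card : ℝ) / (2*(k:ℝ))
        ≤ ((k:ℝ) * sc j)⁻¹ * ∑ e ∈ G.E, X j e := by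
      intro j hj
      have hsc := sc_pos j
      have h2 : ((k:ℝ) * sc j)⁻¹ * (((central m k).card : ℝ) * sc (j+1))
          = ((central m k).card : ℝ) / (2*(k:ℝ)) := by
        rw [sc_succ]
        field_simp
      calc ((central m k).card : ℝ) / (2*(k:ℝ))
          = ((k:ℝ) * sc j)⁻¹ * (((central m k).card : ℝ) * sc (j+1)) := h2.symm
        _ ≤ ((k:ℝ) * sc j)⁻¹ * ∑ e ∈ G.E, X j e := by
            apply mul_le_mul_of_nonneg_left (hlow j hj)
            positivity
    calc ((central m k).card : ℝ) * (((Icc 2 J).card : ℕ) : ℝ) / (2*(k:ℝ))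
        = ∑ _j ∈ Icc 2 J, ((central m k).card : ℝ) / (2*(k:ℝ)) := by
          rw [Finset.sum_const, nsmul_eq_mul]
          ring
      _ ≤ _ := Finset.sum_le_sum h1
  have hcardIcc : (Icc 2 J).card = J - 1 := by
    rw [Nat.card_Icc]
    omega
  rw [hcardIcc] at hfinal
  exact le_trans hfinal hmain


/-- Crude positive lower bound valid for all `k ≥ 2`. -/
lemma cost_small (k : ℕ) (hm : 2 ≤ m) (hk : 2 ≤ k) (G : BrGraph m)
    (hG : G.IsConn (gridA m k) (unitCube m)) :
    (1/4 : ℝ) ≤ G.cost (1 - 1/(m:ℝ)) := by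
  classical
  have hne : (central m k).Nonempty := by
    rw [← Finset.card_pos]
    by_contra h
    push_neg at h
    have h0 : (central m k).card = 0 := by omega
    have hcc := central_card (m := m) k hk
    rw [h0] at hcc
    have hk0 : (0:ℝ) < (k:ℝ)/4 := by
      have : (0:ℝ) < (k:ℝ) := by exact_mod_cast (by omega : 0 < k)
      linarith
    have : (0:ℝ) < ((k:ℝ)/4)^m := by positivity
    simp at hcc
    linarith
  obtain ⟨a₀, ha₀⟩ := hne
  obtain ⟨P, hPgood, _⟩ := get_paths k G hG {a₀}
    (by
      rw [Finset.singleton_subset_iff]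
      exact central_subset_grid k hk ha₀)
    (by
      intro a ha
      rw [Finset.mem_singleton] at ha
      subst ha
      exact mem_unitCube_not_frontier (central_in_cube hk ha₀))
  obtain ⟨hhead, hlast, hchain, hnd, hneL⟩ := hPgood a₀ (Finset.mem_singleton_self a₀)
  have hα : (0:ℝ) ≤ 1 - 1/(m:ℝ) := by
    have h1 : (1:ℝ) ≤ (m:ℝ) := by exact_mod_cast (by omega : 1 ≤ m)
    have h2 : 1/(m:ℝ) ≤ 1 := by
      rw [div_le_one (by linarith)]
      linarith
    linarith
  cases hL : P a₀ with
  | nil => exact absurd hL hneL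
  | cons x t =>
    rw [hL] at hhead hlast hchain hnd
    have hx : x = a₀ := by simpa using hhead
    subst hx
    set g : Pt m → ℝ := fun v => ‖v - x‖ with hg
    have h1 : ∀ e ∈ G.E,
        (if e ∈ wedges (x :: t) then |g e.2 - g e.1| else 0)
          ≤ (G.d e : ℝ)^(1 - 1/(m:ℝ)) * ‖e.2 - e.1‖ := by
      intro e he
      by_cases hmem : e ∈ wedges (x :: t)
      · rw [if_pos hmem]
        have h2 : |g e.2 - g e.1| ≤ ‖e.2 - e.1‖ := by
          rw [hg]
          calc |‖e.2 - x‖ - ‖e.1 - x‖| ≤ ‖(e.2 - x) - (e.1 - x)‖ := abs_norm_sub_norm_le _ _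
            _ = ‖e.2 - e.1‖ := by rw [sub_sub_sub_cancel_right]
        have h3 : (1:ℝ) ≤ (G.d e : ℝ)^(1 - 1/(m:ℝ)) := by
          apply Real.one_le_rpow ?_ hα
          exact_mod_cast hG.2.2.2.2.1 e he
        calc |g e.2 - g e.1| ≤ ‖e.2 - e.1‖ := h2
          _ = 1 * ‖e.2 - e.1‖ := (one_mul _).symm
          _ ≤ (G.d e : ℝ)^(1 - 1/(m:ℝ)) * ‖e.2 - e.1‖ :=
            mul_le_mul_of_nonneg_right h3 (norm_nonneg _)
      · rw [if_neg hmem]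
        positivity
    have h4 : ∑ e ∈ G.E, (if e ∈ wedges (x :: t) then |g e.2 - g e.1| else 0)
        ≤ G.cost (1 - 1/(m:ℝ)) := by
      unfold BrGraph.cost
      exact Finset.sum_le_sum h1
    have h5 : ∑ e ∈ G.E, (if e ∈ wedges (x :: t) then |g e.2 - g e.1| else 0)
        = ((wedges (x :: t)).map (fun e => |g e.2 - g e.1|)).sum :=
      sum_ite_wedges G.E (x :: t) (nodup_wedges hnd)
        (fun e hee => chain'_wedges hchain e hee) _
    have h6 : (1/4:ℝ) ≤ ((wedges (x :: t)).map (fun e => |g e.2 - g e.1|)).sum := by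
      refine le_trans ?_ (telescope g t x)
      have hgx : g x = 0 := by rw [hg]; simp
      have hlastF : (x :: t).getLast (List.cons_ne_nil _ _) ∈ frontier (unitCube m) := by
        apply hlast
        rw [List.getLast?_eq_getLast (List.cons_ne_nil _ _)]
        simp
      have hfar : (1/4 : ℝ) ≤ ‖(x :: t).getLast (List.cons_ne_nil _ _) - x‖ :=
        central_far hk ha₀ hlastF
      rw [hgx, sub_zero, hg]
      rw [abs_of_nonneg (norm_nonneg _)]
      exact hfar
    linarith [h4, h5 ▸ h6]

lemma log_le_scales (k : ℕ) (hk : 4 ≤ k) :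
    Real.log k ≤ 3 * (((Nat.log 2 k) - 1 : ℕ) : ℝ) := by
  set J := Nat.log 2 k with hJdef
  have hJ2 : 2 ≤ J := by
    have h4 : (2:ℕ)^2 ≤ k := by norm_num; omega
    exact (Nat.le_log_iff_pow_le (by norm_num) (by omega)).2 h4
  have hJR : ((J - 1 : ℕ) : ℝ) = (J:ℝ) - 1 := by
    have h1 : 1 ≤ J := by omega
    push_cast [Nat.cast_sub h1]
    ring
  have hk0 : (0:ℝ) < (k:ℝ) := by exact_mod_cast (by omega : 0 < k)
  have hup : Real.log k < ((J:ℝ) + 1) * Real.log 2 := by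
    have h1 : (k:ℝ) < (2:ℝ)^(J+1) := by
      exact_mod_cast Nat.lt_pow_succ_log_self (by norm_num) k
    calc Real.log k < Real.log ((2:ℝ)^(J+1)) := Real.log_lt_log hk0 h1
      _ = ((J:ℝ)+1) * Real.log 2 := by
          rw [Real.log_pow]
          push_cast
          ring
  have hlog2 : Real.log 2 ≤ 3/4 := by linarith [Real.log_two_lt_d9]
  rcases le_or_gt (Real.log k) 3 with h | h
  · have h2 : (1:ℝ) ≤ ((J - 1 : ℕ):ℝ) := by
      rw [hJR]
      have : (2:ℝ) ≤ (J:ℝ) := by exact_mod_cast hJ2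
      linarith
    linarith
  · have h2 : Real.log k < ((J:ℝ)+1) * (3/4) := by
      calc Real.log k < ((J:ℝ)+1)*Real.log 2 := hup
        _ ≤ ((J:ℝ)+1)*(3/4) := by
            apply mul_le_mul_of_nonneg_left hlog2 (by positivity)
    rw [hJR]
    linarith

/-- The full cost lower bound, all `k ≥ 2`. -/
lemma cost_ge (k : ℕ) (hm : 2 ≤ m) (hk : 2 ≤ k) (G : BrGraph m)
    (hG : G.IsConn (gridA m k) (unitCube m)) :
    (12 * 4^m * (8*4^m + 1) : ℝ)⁻¹ * (k:ℝ)^(m-1) * Real.log k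
      ≤ G.cost (1 - 1/(m:ℝ)) := by
  have hk0 : (0:ℝ) < (k:ℝ) := by exact_mod_cast (by omega : 0 < k)
  have hlogk0 : (0:ℝ) ≤ Real.log k := Real.log_nonneg (by exact_mod_cast (by omega : 1 ≤ k))
  have hp : (0:ℝ) < (4:ℝ)^m := by positivity
  rcases le_or_gt 4 k with h4 | h4
  · have hmb := main_bound k hm h4 G hG
    have hlog := log_le_scales k h4
    have hcc := central_card (m := m) k hk
    have hJ1nn : (0:ℝ) ≤ (((Nat.log 2 k) - 1 : ℕ) : ℝ) := Nat.cast_nonneg _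
    have h6 : ((k:ℝ)/4)^m * (((Nat.log 2 k) - 1 : ℕ):ℝ) / (2*(k:ℝ))
        ≤ (8*4^m + 1) * G.cost (1 - 1/(m:ℝ)) := by
      refine le_trans ?_ hmb
      gcongr
    have h7 : (k:ℝ)^(m-1) * Real.log k / (3 * 4^m * 2)
        ≤ ((k:ℝ)/4)^m * (((Nat.log 2 k) - 1 : ℕ):ℝ) / (2*(k:ℝ)) := by
      have hkm : ((k:ℝ)/4)^m = (k:ℝ)^(m-1) * (k:ℝ) / 4^m := by
        rw [div_pow]
        congr 1
        rw [← pow_succ]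
        congr 1
        omega
      have h8 : (k:ℝ)^(m-1) * Real.log k / (3 * 4^m * 2)
          = ((k:ℝ)/4)^m * (Real.log k / 3) / (2*(k:ℝ)) := by
        rw [hkm]
        field_simp
      rw [h8]
      gcongr
      linarith
    have h9 : (k:ℝ)^(m-1) * Real.log k / (3 * 4^m * 2)
        ≤ (8*4^m + 1) * G.cost (1 - 1/(m:ℝ)) := le_trans h7 h6
    have h10 : (k:ℝ)^(m-1) * Real.log k
        ≤ 3 * 4^m * 2 * ((8*4^m + 1) * G.cost (1 - 1/(m:ℝ))) := by
      rw [div_le_iff₀ (by positivity : (0:ℝ) < 3 * 4^m * 2)] at h9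
      linarith [h9]
    have h9' : (0:ℝ) ≤ (8*4^m + 1) * G.cost (1 - 1/(m:ℝ)) :=
      le_trans (by positivity) h9
    have hcost0 : (0:ℝ) ≤ G.cost (1 - 1/(m:ℝ)) := by
      by_contra hc
      push_neg at hc
      nlinarith [h9', hp, mul_pos hp (neg_pos.2 hc)]
    rw [show (12 * 4^m * (8*4^m + 1) : ℝ)⁻¹ * (k:ℝ)^(m-1) * Real.log k
      = ((k:ℝ)^(m-1) * Real.log k) / (12 * 4^m * (8*4^m + 1)) from by ring,
      div_le_iff₀ (by positivity)]
    nlinarith [h10, hcost0, hp, mul_nonneg (mul_nonneg hp.le hp.le) hcost0,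
      mul_nonneg hp.le hcost0]
  · have hsmall := cost_small k hm hk G hG
    have hk3 : (k:ℝ) ≤ 3 := by exact_mod_cast (by omega : k ≤ 3)
    have h1 : (k:ℝ)^(m-1) ≤ (4:ℝ)^m := by
      calc (k:ℝ)^(m-1) ≤ (4:ℝ)^(m-1) :=
            pow_le_pow_left₀ (le_of_lt hk0) (by linarith) _
        _ ≤ (4:ℝ)^m := pow_le_pow_right₀ (by norm_num) (by omega)
    have h2 : Real.log k ≤ 2 := by
      have := Real.log_le_sub_one_of_pos hk0
      linarith
    have h3 : (12 * 4^m * (8*4^m + 1) : ℝ)⁻¹ * (k:ℝ)^(m-1) * Real.log k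
        ≤ (12 * 4^m * (8*4^m + 1) : ℝ)⁻¹ * ((4:ℝ)^m * 2) := by
      rw [mul_assoc]
      apply mul_le_mul_of_nonneg_left ?_ (by positivity)
      apply mul_le_mul h1 h2 hlogk0 (by positivity)
    have h4 : (12 * 4^m * (8*4^m + 1) : ℝ)⁻¹ * ((4:ℝ)^m * 2) ≤ 1/4 := by
      rw [show (12 * 4^m * (8*4^m + 1) : ℝ)⁻¹ * ((4:ℝ)^m * 2)
        = ((4:ℝ)^m * 2) / (12 * 4^m * (8*4^m + 1)) from by ring,
        div_le_iff₀ (by positivity)]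
      nlinarith [hp]
    linarith

end Assembly


end S15
/-- For `m ≥ 2` and the critical exponent `α_m = 1 − 1/m`, there is a constant `C_m > 0`
such that for every integer `k ≥ 2`: `Λ_m^{α_m}(k) ≥ C_m · k^{m−1} · log k`, equivalently
`Ξ_m^{α_m}(k) ≥ C_m · log k`. -/
theorem statement15 (m : ℕ) (hm : 2 ≤ m) :
    ∃ C : ℝ, 0 < C ∧ ∀ k : ℕ, 2 ≤ k →
      ENNReal.ofReal (C * (k : ℝ) ^ (m - 1) * Real.log k) ≤ LamGrid m (1 - 1 / (m : ℝ)) k ∧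
      ENNReal.ofReal (C * Real.log k) ≤ XiGrid m (1 - 1 / (m : ℝ)) k := by
  refine ⟨(12 * 4^m * (8*4^m + 1) : ℝ)⁻¹, by positivity, ?_⟩
  intro k hk
  have hLam : ENNReal.ofReal ((12 * 4^m * (8*4^m + 1) : ℝ)⁻¹ * (k:ℝ)^(m-1) * Real.log k)
      ≤ LamGrid m (1 - 1/(m:ℝ)) k := by
    unfold LamGrid Lbrbd
    refine le_iInf ?_
    intro G
    refine le_iInf ?_
    intro hG
    exact ENNReal.ofReal_le_ofReal (S15.cost_ge k hm hk G hG)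
  refine ⟨hLam, ?_⟩
  unfold XiGrid
  have hk0 : (0:ℝ) < (k:ℝ) := by exact_mod_cast (by omega : 0 < k)
  have hm0 : (m:ℝ) ≠ 0 := by positivity
  have hα : (m:ℝ) * (1 - 1/(m:ℝ)) = ((m-1:ℕ):ℝ) := by
    have h1 : ((m-1:ℕ):ℝ) = (m:ℝ) - 1 := by
      push_cast [Nat.cast_sub (by omega : 1 ≤ m)]
      ring
    rw [h1]
    field_simp
  have hpow : (k:ℝ)^(-((m:ℝ) * (1 - 1/(m:ℝ)))) * (k:ℝ)^(m-1) = 1 := by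
    rw [hα, ← Real.rpow_natCast (k:ℝ) (m-1), ← Real.rpow_add hk0]
    simp
  have hnn : (0:ℝ) ≤ (k:ℝ)^(-((m:ℝ) * (1 - 1/(m:ℝ)))) :=
    Real.rpow_nonneg (le_of_lt hk0) _
  calc ENNReal.ofReal ((12 * 4^m * (8*4^m + 1) : ℝ)⁻¹ * Real.log k)
      = ENNReal.ofReal ((k:ℝ)^(-((m:ℝ) * (1 - 1/(m:ℝ))))
          * ((12 * 4^m * (8*4^m + 1) : ℝ)⁻¹ * (k:ℝ)^(m-1) * Real.log k)) := by
        congr 1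
        rw [show (k:ℝ)^(-((m:ℝ) * (1 - 1/(m:ℝ))))
            * ((12 * 4^m * (8*4^m + 1) : ℝ)⁻¹ * (k:ℝ)^(m-1) * Real.log k)
          = ((k:ℝ)^(-((m:ℝ) * (1 - 1/(m:ℝ)))) * (k:ℝ)^(m-1))
            * ((12 * 4^m * (8*4^m + 1) : ℝ)⁻¹ * Real.log k) from by ring, hpow, one_mul]
    _ = ENNReal.ofReal ((k:ℝ)^(-((m:ℝ) * (1 - 1/(m:ℝ)))))
          * ENNReal.ofReal ((12 * 4^m * (8*4^m + 1) : ℝ)⁻¹ * (k:ℝ)^(m-1) * Real.log k) :=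
        ENNReal.ofReal_mul hnn
    _ ≤ ENNReal.ofReal ((k:ℝ)^(-((m:ℝ) * (1 - 1/(m:ℝ)))))
          * LamGrid m (1 - 1/(m:ℝ)) k := mul_le_mul_right hLam _

end
end

section
/- Let Ω ⊆ ℝ^m be an open set, let P and Q be disjoint finite subsets of Ω, and let (Ω_p)_{p∈𝔓} be a finite family of pairwise disjoint open convex subsets of Ω such that Q ∩ cl(Ω_p) = ∅ and P ∩ ∂Ω_p = ∅ for every p. Then ℒ^α_brbd(P, Q, Ω) ≥ Σ_{p∈𝔓} ℒ^α_brbd(P ∩ Ω_p, ∂Ω_p). -/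
open scoped ENNReal
open scoped Classical

noncomputable section

/-- `G` is a weighted directed graph connecting the positive charges `P` to the negative
charges `Q` in `Ω`: the balance law at an interior vertex `a` has source `+1` if `a ∈ P`,
`−1` if `a ∈ Q`, and `0` otherwise. -/
def BrGraph.IsConnPQ {m : ℕ} (G : BrGraph m) (P Q : Finset (Pt m)) (Ω : Set (Pt m)) :
    Prop :=
  P ⊆ G.V ∧ Q ⊆ G.V ∧
  (G.V : Set (Pt m)) ⊆ closure Ω ∧
  (∀ e ∈ G.E, e.1 ∈ G.V ∧ e.2 ∈ G.V ∧ e.1 ≠ e.2) ∧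
  (∀ e ∈ G.E, (e.2, e.1) ∉ G.E) ∧
  (∀ e ∈ G.E, 1 ≤ G.d e) ∧
  ∀ a ∈ G.V, a ∉ frontier Ω →
    (∑ e ∈ G.E.filter (fun e => e.1 = a), (G.d e : ℤ)) =
      (∑ e ∈ G.E.filter (fun e => e.2 = a), (G.d e : ℤ)) +
      (if a ∈ P then 1 else if a ∈ Q then -1 else 0)

/-- `ℒ^α_brbd(P, Q, Ω) = inf { W_α(G) : G ∈ 𝒢(P, Q, Ω) } ∈ [0, ∞]`. -/
def LbrbdPQ (m : ℕ) (α : ℝ) (P Q : Finset (Pt m)) (Ω : Set (Pt m)) : ℝ≥0∞ :=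
  ⨅ (G : BrGraph m) (_ : G.IsConnPQ P Q Ω), ENNReal.ofReal (G.cost α)

open scoped NNReal
open MeasureTheory

namespace Stmt16

variable {m : ℕ}

/-- Affine parametrization of the segment of an edge. -/
def gam (e : Pt m × Pt m) (t : ℝ) : Pt m := e.1 + t • (e.2 - e.1)

lemma gam_cont (e : Pt m × Pt m) : Continuous (gam e) := by
  unfold gam
  exact continuous_const.add (continuous_id.smul continuous_const)

@[simp] lemma gam_zero (e : Pt m × Pt m) : gam e 0 = e.1 := by simp [gam]

@[simp] lemma gam_one (e : Pt m × Pt m) : gam e 1 = e.2 := by simp [gam]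

lemma gam_sub (e : Pt m × Pt m) (s t : ℝ) :
    gam e t - gam e s = (t - s) • (e.2 - e.1) := by
  simp only [gam]
  module

lemma gam_inj (e : Pt m × Pt m) (hne : e.1 ≠ e.2) {s t : ℝ} (h : gam e s = gam e t) :
    s = t := by
  have h2 : (s - t) • (e.2 - e.1) = 0 := by
    rw [← gam_sub]; rw [h]; simp
  rcases smul_eq_zero.1 h2 with h3 | h3
  · linarith [sub_eq_zero.1 h3]
  · exact absurd (sub_eq_zero.1 h3).symm hne

/-- Parameter set of the part of the segment inside `closure U`. -/
def tset (U : Set (Pt m)) (e : Pt m × Pt m) : Set ℝ :=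
  Set.Icc (0:ℝ) 1 ∩ (gam e) ⁻¹' (closure U)

def t0 (U : Set (Pt m)) (e : Pt m × Pt m) : ℝ := sInf (tset U e)
def t1 (U : Set (Pt m)) (e : Pt m × Pt m) : ℝ := sSup (tset U e)

/-- The clipped edge. -/
def clip (U : Set (Pt m)) (e : Pt m × Pt m) : Pt m × Pt m :=
  (gam e (t0 U e), gam e (t1 U e))

variable {U : Set (Pt m)} {e : Pt m × Pt m}

lemma tset_closed : IsClosed (tset U e) :=
  isClosed_Icc.inter (isClosed_closure.preimage (gam_cont e))

lemma tset_subset : tset U e ⊆ Set.Icc (0:ℝ) 1 := Set.inter_subset_left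

lemma tset_bddBelow : BddBelow (tset U e) := ⟨0, fun t ht => (tset_subset ht).1⟩
lemma tset_bddAbove : BddAbove (tset U e) := ⟨1, fun t ht => (tset_subset ht).2⟩

lemma tset_nonempty (he : e.1 ∈ U ∨ e.2 ∈ U) : (tset U e).Nonempty := by
  rcases he with h | h
  · exact ⟨0, ⟨by norm_num, by simpa using subset_closure h⟩⟩
  · exact ⟨1, ⟨by norm_num, by simpa using subset_closure h⟩⟩

lemma t0_mem (he : e.1 ∈ U ∨ e.2 ∈ U) : t0 U e ∈ tset U e :=
  tset_closed.csInf_mem (tset_nonempty he) tset_bddBelow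

lemma t1_mem (he : e.1 ∈ U ∨ e.2 ∈ U) : t1 U e ∈ tset U e :=
  tset_closed.csSup_mem (tset_nonempty he) tset_bddAbove

lemma t0_nonneg (he : e.1 ∈ U ∨ e.2 ∈ U) : 0 ≤ t0 U e := ((t0_mem he).1).1
lemma t1_le_one (he : e.1 ∈ U ∨ e.2 ∈ U) : t1 U e ≤ 1 := ((t1_mem he).1).2
lemma t0_le_t1 (he : e.1 ∈ U ∨ e.2 ∈ U) : t0 U e ≤ t1 U e :=
  csInf_le_csSup (tset_nonempty he) tset_bddBelow tset_bddAbove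

lemma clip_fst_mem_closure (he : e.1 ∈ U ∨ e.2 ∈ U) : (clip U e).1 ∈ closure U :=
  (t0_mem he).2

lemma clip_snd_mem_closure (he : e.1 ∈ U ∨ e.2 ∈ U) : (clip U e).2 ∈ closure U :=
  (t1_mem he).2

lemma t0_eq_zero (h : e.1 ∈ U) : t0 U e = 0 := by
  have h0 : (0:ℝ) ∈ tset U e := ⟨by norm_num, by simpa using subset_closure h⟩
  exact le_antisymm (csInf_le tset_bddBelow h0) (t0_nonneg (Or.inl h))

lemma t1_eq_one (h : e.2 ∈ U) : t1 U e = 1 := by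
  have h0 : (1:ℝ) ∈ tset U e := ⟨by norm_num, by simpa using subset_closure h⟩
  exact le_antisymm (t1_le_one (Or.inr h)) (le_csSup tset_bddAbove h0)

lemma t0_eq_zero_of_mem (hU : IsOpen U) (he : e.1 ∈ U ∨ e.2 ∈ U)
    (h : gam e (t0 U e) ∈ U) : t0 U e = 0 := by
  by_contra hne
  have hpos : 0 < t0 U e := lt_of_le_of_ne (t0_nonneg he) (Ne.symm hne)
  have hopen : IsOpen ((gam e) ⁻¹' U) := hU.preimage (gam_cont e)
  obtain ⟨δ, hδ, hball⟩ := Metric.isOpen_iff.1 hopen _ h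
  set t : ℝ := max 0 (t0 U e - δ/2) with ht
  have htlt : t < t0 U e := by
    rcases max_cases 0 (t0 U e - δ/2) with ⟨h1, _⟩ | ⟨h1, _⟩ <;> rw [ht, h1] <;> linarith
  have htmem : t ∈ tset U e := by
    refine ⟨⟨le_max_left _ _, le_trans htlt.le ((t0_mem he).1.2)⟩, ?_⟩
    have : t ∈ Metric.ball (t0 U e) δ := by
      rw [Metric.mem_ball, Real.dist_eq, abs_sub_lt_iff]
      constructor
      · linarith
      · rcases max_cases 0 (t0 U e - δ/2) with ⟨h1, h2⟩ | ⟨h1, _⟩ <;> rw [ht, h1] <;> linarith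
    exact subset_closure (hball this)
  exact absurd (csInf_le tset_bddBelow htmem) (not_le.2 htlt)

lemma t1_eq_one_of_mem (hU : IsOpen U) (he : e.1 ∈ U ∨ e.2 ∈ U)
    (h : gam e (t1 U e) ∈ U) : t1 U e = 1 := by
  by_contra hne
  have hlt : t1 U e < 1 := lt_of_le_of_ne (t1_le_one he) hne
  have hopen : IsOpen ((gam e) ⁻¹' U) := hU.preimage (gam_cont e)
  obtain ⟨δ, hδ, hball⟩ := Metric.isOpen_iff.1 hopen _ h
  set t : ℝ := min 1 (t1 U e + δ/2) with ht
  have htgt : t1 U e < t := by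
    rcases min_cases 1 (t1 U e + δ/2) with ⟨h1, _⟩ | ⟨h1, _⟩ <;> rw [ht, h1] <;> linarith
  have htmem : t ∈ tset U e := by
    refine ⟨⟨le_trans ((t0_mem he).1.1) (le_trans (t0_le_t1 he) htgt.le), min_le_left _ _⟩, ?_⟩
    have : t ∈ Metric.ball (t1 U e) δ := by
      rw [Metric.mem_ball, Real.dist_eq, abs_sub_lt_iff]
      constructor
      · rcases min_cases 1 (t1 U e + δ/2) with ⟨h1, h2⟩ | ⟨h1, _⟩ <;> rw [ht, h1] <;> linarith
      · linarith
    exact subset_closure (hball this)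
  exact absurd (le_csSup tset_bddAbove htmem) (not_le.2 htgt)

lemma t0_lt_t1 (hU : IsOpen U) (he : e.1 ∈ U ∨ e.2 ∈ U) : t0 U e < t1 U e := by
  rcases lt_or_eq_of_le (t0_le_t1 he) with h | h
  · exact h
  · exfalso
    have he' := he
    rcases he' with h1 | h1
    · have e0 : t0 U e = 0 := t0_eq_zero h1
      have : gam e (t1 U e) ∈ U := by rw [← h, e0]; simpa using h1
      have := t1_eq_one_of_mem hU he this
      rw [← h, e0] at this; norm_num at this
    · have e1 : t1 U e = 1 := t1_eq_one h1
      have : gam e (t0 U e) ∈ U := by rw [h, e1]; simpa using h1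
      have := t0_eq_zero_of_mem hU he this
      rw [h, e1] at this; norm_num at this

lemma clip_ne (hU : IsOpen U) (he : e.1 ∈ U ∨ e.2 ∈ U) (hne : e.1 ≠ e.2) :
    (clip U e).1 ≠ (clip U e).2 := by
  intro h
  exact absurd (gam_inj e hne h) (ne_of_lt (t0_lt_t1 hU he))

/-- Key: interior parameters map into `U`. -/
lemma gam_mem_of_Ioo (hU : IsOpen U) (hc : Convex ℝ U) (he : e.1 ∈ U ∨ e.2 ∈ U)
    {t : ℝ} (ht : t ∈ Set.Ioo (t0 U e) (t1 U e)) : gam e t ∈ U := by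
  have hlt : t0 U e < t1 U e := lt_trans ht.1 ht.2
  set s : ℝ := (t - t0 U e) / (t1 U e - t0 U e) with hs
  have hs0 : 0 < s := div_pos (by linarith [ht.1]) (by linarith)
  have hs1 : s < 1 := (div_lt_one (by linarith)).2 (by linarith [ht.2])
  have hne0 : t1 U e - t0 U e ≠ 0 := ne_of_gt (by linarith)
  have hseg : gam e t ∈ openSegment ℝ (gam e (t0 U e)) (gam e (t1 U e)) := by
    refine ⟨1 - s, s, by linarith, hs0, by ring, ?_⟩
    show (1 - s) • gam e (t0 U e) + s • gam e (t1 U e) = gam e t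
    have harg : (1 - s) * t0 U e + s * t1 U e = t := by
      rw [hs]; field_simp; ring
    simp only [gam]
    rw [← harg]
    module
  have he' := he
  rcases he' with h1 | h1
  · have e0 : t0 U e = 0 := t0_eq_zero h1
    have hx : gam e (t0 U e) ∈ interior U := by
      rw [e0, gam_zero, hU.interior_eq]; exact h1
    have := hc.openSegment_interior_closure_subset_interior hx (t1_mem he).2 hseg
    rwa [hU.interior_eq] at this
  · have e1 : t1 U e = 1 := t1_eq_one h1
    have hy : gam e (t1 U e) ∈ interior U := by
      rw [e1, gam_one, hU.interior_eq]; exact h1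
    have := hc.openSegment_closure_interior_subset_interior (t0_mem he).2 hy hseg
    rwa [hU.interior_eq] at this

lemma clip_len (he : e.1 ∈ U ∨ e.2 ∈ U) :
    ‖(clip U e).2 - (clip U e).1‖ = (t1 U e - t0 U e) * ‖e.2 - e.1‖ := by
  show ‖gam e (t1 U e) - gam e (t0 U e)‖ = _
  rw [gam_sub, norm_smul, Real.norm_eq_abs, abs_of_nonneg (by linarith [t0_le_t1 he])]

/-- If the clipped source lies in `U`, then it is the original source. -/
lemma clip_fst_eq_iff (hU : IsOpen U) (he : e.1 ∈ U ∨ e.2 ∈ U) {a : Pt m} (ha : a ∈ U) :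
    (clip U e).1 = a ↔ e.1 = a := by
  constructor
  · intro h
    have : gam e (t0 U e) ∈ U := by rw [show gam e (t0 U e) = (clip U e).1 from rfl, h]; exact ha
    have h0 := t0_eq_zero_of_mem hU he this
    have : (clip U e).1 = e.1 := by show gam e (t0 U e) = e.1; rw [h0]; simp
    rw [← this, h]
  · intro h
    have h0 : t0 U e = 0 := t0_eq_zero (h ▸ ha)
    show gam e (t0 U e) = a
    rw [h0]; simpa using h

lemma clip_snd_eq_iff (hU : IsOpen U) (he : e.1 ∈ U ∨ e.2 ∈ U) {a : Pt m} (ha : a ∈ U) :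
    (clip U e).2 = a ↔ e.2 = a := by
  constructor
  · intro h
    have : gam e (t1 U e) ∈ U := by rw [show gam e (t1 U e) = (clip U e).2 from rfl, h]; exact ha
    have h1 := t1_eq_one_of_mem hU he this
    have : (clip U e).2 = e.2 := by show gam e (t1 U e) = e.2; rw [h1]; simp
    rw [← this, h]
  · intro h
    have h1 : t1 U e = 1 := t1_eq_one (h ▸ ha)
    show gam e (t1 U e) = a
    rw [h1]; simpa using h


/-- Edges of `G` meeting `U`. -/
def Ep (G : BrGraph m) (U : Set (Pt m)) : Finset (Pt m × Pt m) :=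
  G.E.filter (fun e => e.1 ∈ U ∨ e.2 ∈ U)

lemma mem_Ep {G : BrGraph m} {U : Set (Pt m)} {e : Pt m × Pt m} (h : e ∈ Ep G U) :
    e ∈ G.E ∧ (e.1 ∈ U ∨ e.2 ∈ U) := Finset.mem_filter.1 h

def clipped (G : BrGraph m) (U : Set (Pt m)) : Finset (Pt m × Pt m) :=
  (Ep G U).image (clip U)

/-- total multiplicity clipping onto a given oriented segment -/
def Dm (G : BrGraph m) (U : Set (Pt m)) (c : Pt m × Pt m) : ℕ :=
  ∑ e ∈ (Ep G U).filter (fun e => clip U e = c), G.d e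

lemma mem_clipped_of_Dm_ne {G : BrGraph m} {U : Set (Pt m)} {c : Pt m × Pt m}
    (h : Dm G U c ≠ 0) : c ∈ clipped G U := by
  have : ((Ep G U).filter (fun e => clip U e = c)).Nonempty := by
    by_contra hn
    rw [Finset.not_nonempty_iff_eq_empty] at hn
    exact h (by simp [Dm, hn])
  obtain ⟨e, he⟩ := this
  obtain ⟨he1, he2⟩ := Finset.mem_filter.1 he
  exact he2 ▸ Finset.mem_image_of_mem _ he1

def GpE (G : BrGraph m) (U : Set (Pt m)) : Finset (Pt m × Pt m) :=
  (clipped G U).filter (fun c => Dm G U (c.2, c.1) < Dm G U c)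

lemma mem_GpE_iff {G : BrGraph m} {U : Set (Pt m)} {c : Pt m × Pt m} :
    c ∈ GpE G U ↔ Dm G U (c.2, c.1) < Dm G U c := by
  constructor
  · exact fun h => (Finset.mem_filter.1 h).2
  · intro h
    refine Finset.mem_filter.2 ⟨mem_clipped_of_Dm_ne (by omega), h⟩

/-- The clipped graph. -/
def Gp (G : BrGraph m) (U : Set (Pt m)) (A : Finset (Pt m)) : BrGraph m where
  V := A ∪ (clipped G U).image Prod.fst ∪ (clipped G U).image Prod.snd
  E := GpE G U
  d := fun c => Dm G U c - Dm G U (c.2, c.1)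

/-- helper -/
lemma max_sub_max_neg (x : ℤ) : max x 0 - max (-x) 0 = x := by
  rcases le_total x 0 with h | h
  · rw [max_eq_right h, max_eq_left (by omega)]; omega
  · rw [max_eq_left h, max_eq_right (by omega)]; omega

section balance

variable {U : Set (Pt m)} {G : BrGraph m} {P Q A : Finset (Pt m)} {Ω : Set (Pt m)}

/-- The balance law for the clipped graph, integer version. -/
lemma balance_int (hU : IsOpen U) (hΩo : IsOpen Ω) (hUΩ : U ⊆ Ω)
    (hG : G.IsConnPQ P Q Ω)
    (hQU : (Q : Set (Pt m)) ∩ closure U = ∅)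
    (hA : (A : Set (Pt m)) = (P : Set (Pt m)) ∩ U)
    {a : Pt m} (ha : a ∈ U) (haV : a ∈ G.V) :
    (∑ c ∈ (GpE G U).filter (fun c => c.1 = a), ((Gp G U A).d c : ℤ)) =
      (∑ c ∈ (GpE G U).filter (fun c => c.2 = a), ((Gp G U A).d c : ℤ)) +
      (if a ∈ A then 1 else 0) := by
  classical
  set T : Finset (Pt m × Pt m) := clipped G U ∪ (clipped G U).image Prod.swap with hT
  set D : Pt m × Pt m → ℤ := fun c => (Dm G U c : ℤ) with hD
  set F : Pt m × Pt m → ℤ := fun c => D c - D c.swap with hF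
  have hDnonneg : ∀ c, 0 ≤ D c := fun c => Int.ofNat_nonneg _
  have hDzero : ∀ c, c ∉ clipped G U → D c = 0 := by
    intro c hc
    by_contra h
    exact hc (mem_clipped_of_Dm_ne (by simpa [hD] using h))
  have hclipT : clipped G U ⊆ T := Finset.subset_union_left
  have hGpT : GpE G U ⊆ T := fun c hc => hclipT (Finset.mem_filter.1 hc).1
  have hTswap : ∀ c ∈ T, c.swap ∈ T := by
    intro c hc
    rcases Finset.mem_union.1 hc with h | h
    · exact Finset.mem_union_right _ (Finset.mem_image_of_mem _ h)
    · obtain ⟨b, hb, rfl⟩ := Finset.mem_image.1 h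
      exact Finset.mem_union_left _ (by simpa using hb)
  have hmemF : ∀ c, c ∈ GpE G U ↔ 0 < F c := by
    intro c
    rw [mem_GpE_iff]
    simp only [hF, hD, Prod.swap]
    omega
  have hdF : ∀ c ∈ GpE G U, ((Gp G U A).d c : ℤ) = F c := by
    intro c hc
    have := mem_GpE_iff.1 hc
    simp only [Gp, hF, hD, Prod.swap]
    omega
  have outeq : (∑ c ∈ (GpE G U).filter (fun c => c.1 = a), ((Gp G U A).d c : ℤ)) =
      ∑ c ∈ T.filter (fun c => c.1 = a), max (F c) 0 := by
    have e1 : (∑ c ∈ (GpE G U).filter (fun c => c.1 = a), ((Gp G U A).d c : ℤ)) =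
        ∑ c ∈ (GpE G U).filter (fun c => c.1 = a), max (F c) 0 := by
      refine Finset.sum_congr rfl fun c hc => ?_
      rw [hdF c (Finset.mem_filter.1 hc).1]
      exact (max_eq_left (le_of_lt ((hmemF c).1 (Finset.mem_filter.1 hc).1))).symm
    rw [e1]
    refine Finset.sum_subset (Finset.filter_subset_filter _ hGpT) ?_
    intro c hcT hcnot
    have h1 : c.1 = a := (Finset.mem_filter.1 hcT).2
    have : c ∉ GpE G U := fun h => hcnot (Finset.mem_filter.2 ⟨h, h1⟩)
    rw [hmemF] at this
    omega
  have ineq : (∑ c ∈ (GpE G U).filter (fun c => c.2 = a), ((Gp G U A).d c : ℤ)) =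
      ∑ c ∈ T.filter (fun c => c.2 = a), max (F c) 0 := by
    have e1 : (∑ c ∈ (GpE G U).filter (fun c => c.2 = a), ((Gp G U A).d c : ℤ)) =
        ∑ c ∈ (GpE G U).filter (fun c => c.2 = a), max (F c) 0 := by
      refine Finset.sum_congr rfl fun c hc => ?_
      rw [hdF c (Finset.mem_filter.1 hc).1]
      exact (max_eq_left (le_of_lt ((hmemF c).1 (Finset.mem_filter.1 hc).1))).symm
    rw [e1]
    refine Finset.sum_subset (Finset.filter_subset_filter _ hGpT) ?_
    intro c hcT hcnot
    have h1 : c.2 = a := (Finset.mem_filter.1 hcT).2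
    have : c ∉ GpE G U := fun h => hcnot (Finset.mem_filter.2 ⟨h, h1⟩)
    rw [hmemF] at this
    omega
  -- swap bijection on T
  have swapsum : ∀ f : Pt m × Pt m → ℤ,
      ∑ c ∈ T.filter (fun c => c.2 = a), f c =
      ∑ c ∈ T.filter (fun c => c.1 = a), f c.swap := by
    intro f
    refine Finset.sum_nbij' (i := Prod.swap) (j := Prod.swap) ?_ ?_ ?_ ?_ ?_
    · intro c hc
      obtain ⟨h1, h2⟩ := Finset.mem_filter.1 hc
      exact Finset.mem_filter.2 ⟨hTswap c h1, h2⟩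
    · intro c hc
      obtain ⟨h1, h2⟩ := Finset.mem_filter.1 hc
      exact Finset.mem_filter.2 ⟨hTswap c h1, h2⟩
    · intro c _; simp
    · intro c _; simp
    · intro c _; simp
  have ineq2 : (∑ c ∈ (GpE G U).filter (fun c => c.2 = a), ((Gp G U A).d c : ℤ)) =
      ∑ c ∈ T.filter (fun c => c.1 = a), max (-F c) 0 := by
    rw [ineq, swapsum (fun c => max (F c) 0)]
    refine Finset.sum_congr rfl fun c _ => ?_
    have : F c.swap = -F c := by simp [hF, hD]
    rw [this]
  -- net flux
  have net : (∑ c ∈ (GpE G U).filter (fun c => c.1 = a), ((Gp G U A).d c : ℤ)) -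
      (∑ c ∈ (GpE G U).filter (fun c => c.2 = a), ((Gp G U A).d c : ℤ)) =
      ∑ c ∈ T.filter (fun c => c.1 = a), F c := by
    rw [outeq, ineq2, ← Finset.sum_sub_distrib]
    exact Finset.sum_congr rfl fun c _ => max_sub_max_neg (F c)
  have netD : ∑ c ∈ T.filter (fun c => c.1 = a), F c =
      (∑ c ∈ T.filter (fun c => c.1 = a), D c) -
      (∑ c ∈ T.filter (fun c => c.2 = a), D c) := by
    rw [swapsum D, ← Finset.sum_sub_distrib]
  -- restrict to clipped
  have restr1 : (∑ c ∈ T.filter (fun c => c.1 = a), D c) =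
      ∑ c ∈ (clipped G U).filter (fun c => c.1 = a), D c := by
    refine (Finset.sum_subset (Finset.filter_subset_filter _ hclipT) ?_).symm
    intro c hcT hcnot
    refine hDzero c fun h => hcnot (Finset.mem_filter.2 ⟨h, (Finset.mem_filter.1 hcT).2⟩)
  have restr2 : (∑ c ∈ T.filter (fun c => c.2 = a), D c) =
      ∑ c ∈ (clipped G U).filter (fun c => c.2 = a), D c := by
    refine (Finset.sum_subset (Finset.filter_subset_filter _ hclipT) ?_).symm
    intro c hcT hcnot
    refine hDzero c fun h => hcnot (Finset.mem_filter.2 ⟨h, (Finset.mem_filter.1 hcT).2⟩)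
  -- fiberwise
  have fib1 : (∑ c ∈ (clipped G U).filter (fun c => c.1 = a), D c) =
      ∑ e ∈ G.E.filter (fun e => e.1 = a), (G.d e : ℤ) := by
    have h1 : (∑ c ∈ (clipped G U).filter (fun c => c.1 = a), D c) =
        ∑ c ∈ (clipped G U).filter (fun c => c.1 = a),
          ∑ e ∈ (Ep G U).filter (fun e => clip U e = c), (G.d e : ℤ) := by
      refine Finset.sum_congr rfl fun c _ => ?_
      simp [hD, Dm]
    rw [h1, Finset.sum_fiberwise_eq_sum_filter]
    have h2 : (Ep G U).filter
        (fun e => clip U e ∈ (clipped G U).filter (fun c => c.1 = a)) =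
        (Ep G U).filter (fun e => e.1 = a) := by
      refine Finset.filter_congr fun e he => ?_
      have hmem : clip U e ∈ clipped G U := Finset.mem_image_of_mem _ he
      simp only [Finset.mem_filter, hmem, true_and]
      exact clip_fst_eq_iff hU (mem_Ep he).2 ha
    rw [h2]
    have h3 : (Ep G U).filter (fun e => e.1 = a) = G.E.filter (fun e => e.1 = a) := by
      rw [Ep, Finset.filter_filter]
      refine Finset.filter_congr fun e he => ?_
      constructor
      · exact fun h => h.2
      · exact fun h => ⟨Or.inl (h ▸ ha), h⟩
    rw [h3]
  have fib2 : (∑ c ∈ (clipped G U).filter (fun c => c.2 = a), D c) =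
      ∑ e ∈ G.E.filter (fun e => e.2 = a), (G.d e : ℤ) := by
    have h1 : (∑ c ∈ (clipped G U).filter (fun c => c.2 = a), D c) =
        ∑ c ∈ (clipped G U).filter (fun c => c.2 = a),
          ∑ e ∈ (Ep G U).filter (fun e => clip U e = c), (G.d e : ℤ) := by
      refine Finset.sum_congr rfl fun c _ => ?_
      simp [hD, Dm]
    rw [h1, Finset.sum_fiberwise_eq_sum_filter]
    have h2 : (Ep G U).filter
        (fun e => clip U e ∈ (clipped G U).filter (fun c => c.2 = a)) =
        (Ep G U).filter (fun e => e.2 = a) := by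
      refine Finset.filter_congr fun e he => ?_
      have hmem : clip U e ∈ clipped G U := Finset.mem_image_of_mem _ he
      simp only [Finset.mem_filter, hmem, true_and]
      exact clip_snd_eq_iff hU (mem_Ep he).2 ha
    rw [h2]
    have h3 : (Ep G U).filter (fun e => e.2 = a) = G.E.filter (fun e => e.2 = a) := by
      rw [Ep, Finset.filter_filter]
      refine Finset.filter_congr fun e he => ?_
      constructor
      · exact fun h => h.2
      · exact fun h => ⟨Or.inr (h ▸ ha), h⟩
    rw [h3]
  -- use G's balance
  have hafr : a ∉ frontier Ω := by
    have : a ∈ Ω := hUΩ ha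
    rw [hΩo.frontier_eq]
    exact fun h => h.2 this
  have hbal := hG.2.2.2.2.2.2 a haV hafr
  have haQ : a ∉ Q := by
    intro h
    have : a ∈ (Q : Set (Pt m)) ∩ closure U := ⟨h, subset_closure ha⟩
    rw [hQU] at this
    exact this
  have haPA : a ∈ A ↔ a ∈ P := by
    constructor
    · intro h
      have : a ∈ (P : Set (Pt m)) ∩ U := hA ▸ (Finset.mem_coe.2 h)
      exact this.1
    · intro h
      have : a ∈ (A : Set (Pt m)) := hA ▸ Set.mem_inter (Finset.mem_coe.2 h) ha
      exact this
  have final : (∑ e ∈ G.E.filter (fun e => e.1 = a), (G.d e : ℤ)) -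
      (∑ e ∈ G.E.filter (fun e => e.2 = a), (G.d e : ℤ)) = (if a ∈ A then 1 else 0) := by
    rw [hbal]
    by_cases hP : a ∈ P
    · simp [hP, haPA.2 hP]
    · have : a ∉ A := fun h => hP (haPA.1 h)
      simp [hP, haQ, this]
  omega

end balance

open MeasureTheory

lemma mem_clipped {G : BrGraph m} {U : Set (Pt m)} {c : Pt m × Pt m}
    (h : c ∈ clipped G U) : ∃ e ∈ Ep G U, clip U e = c := by
  simpa using Finset.mem_image.1 h

section conn
variable {U : Set (Pt m)} {G : BrGraph m} {P Q A : Finset (Pt m)} {Ω : Set (Pt m)}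

lemma isConn_Gp (hU : IsOpen U) (hΩo : IsOpen Ω) (hUΩ : U ⊆ Ω)
    (hG : G.IsConnPQ P Q Ω)
    (hQU : (Q : Set (Pt m)) ∩ closure U = ∅)
    (hA : (A : Set (Pt m)) = (P : Set (Pt m)) ∩ U) :
    (Gp G U A).IsConn A U := by
  obtain ⟨hPV, hQV, hVcl, hEp, hrev, hd1, hbal⟩ := hG
  refine ⟨?_, ?_, ?_, ?_, ?_, ?_⟩
  · -- A ⊆ V
    intro a haA
    exact Finset.mem_union_left _ (Finset.mem_union_left _ haA)
  · -- V ⊆ closure U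
    intro a haV
    rcases Finset.mem_union.1 haV with h | h
    · rcases Finset.mem_union.1 h with h | h
      · have : a ∈ (P : Set (Pt m)) ∩ U := hA ▸ Finset.mem_coe.2 h
        exact subset_closure this.2
      · obtain ⟨c, hc, rfl⟩ := Finset.mem_image.1 h
        obtain ⟨e, he, rfl⟩ := mem_clipped hc
        exact clip_fst_mem_closure (mem_Ep he).2
    · obtain ⟨c, hc, rfl⟩ := Finset.mem_image.1 h
      obtain ⟨e, he, rfl⟩ := mem_clipped hc
      exact clip_snd_mem_closure (mem_Ep he).2
  · -- edges
    intro c hc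
    have hcc : c ∈ clipped G U := (Finset.mem_filter.1 hc).1
    obtain ⟨e, he, rfl⟩ := mem_clipped hcc
    refine ⟨?_, ?_, ?_⟩
    · exact Finset.mem_union_left _ (Finset.mem_union_right _ (Finset.mem_image_of_mem _ hcc))
    · exact Finset.mem_union_right _ (Finset.mem_image_of_mem _ hcc)
    · exact clip_ne hU (mem_Ep he).2 (hEp e (mem_Ep he).1).2.2
  · -- no reverse
    intro c hc hcrev
    have h1 := mem_GpE_iff.1 hc
    have h2 := mem_GpE_iff.1 hcrev
    simp only [Prod.mk.eta] at h2
    omega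
  · -- d ≥ 1
    intro c hc
    have := mem_GpE_iff.1 hc
    show 1 ≤ Dm G U c - Dm G U (c.2, c.1)
    omega
  · -- balance
    intro a haV hafr
    have haU : a ∈ U := by
      have hacl : a ∈ closure U := by
        have hVcl' : ((Gp G U A).V : Set (Pt m)) ⊆ closure U := by
          intro x hx
          rcases Finset.mem_union.1 (Finset.mem_coe.1 hx) with h | h
          · rcases Finset.mem_union.1 h with h | h
            · have : x ∈ (P : Set (Pt m)) ∩ U := hA ▸ Finset.mem_coe.2 h
              exact subset_closure this.2
            · obtain ⟨c, hc, rfl⟩ := Finset.mem_image.1 h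
              obtain ⟨e, he, rfl⟩ := mem_clipped hc
              exact clip_fst_mem_closure (mem_Ep he).2
          · obtain ⟨c, hc, rfl⟩ := Finset.mem_image.1 h
            obtain ⟨e, he, rfl⟩ := mem_clipped hc
            exact clip_snd_mem_closure (mem_Ep he).2
        exact hVcl' (Finset.mem_coe.2 haV)
      by_contra hnotU
      exact hafr ⟨hacl, by rwa [hU.interior_eq]⟩
    have haGV : a ∈ G.V := by
      rcases Finset.mem_union.1 haV with h | h
      · rcases Finset.mem_union.1 h with h | h
        · have : a ∈ (P : Set (Pt m)) ∩ U := hA ▸ Finset.mem_coe.2 h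
          exact hPV (by exact_mod_cast this.1)
        · obtain ⟨c, hc, rfl⟩ := Finset.mem_image.1 h
          obtain ⟨e, he, hce⟩ := mem_clipped hc
          have h1 : (clip U e).1 = c.1 := by rw [hce]
          have h2 : e.1 = c.1 := (clip_fst_eq_iff hU (mem_Ep he).2 haU).1 h1
          exact h2 ▸ (hEp e (mem_Ep he).1).1
      · obtain ⟨c, hc, rfl⟩ := Finset.mem_image.1 h
        obtain ⟨e, he, hce⟩ := mem_clipped hc
        have h1 : (clip U e).2 = c.2 := by rw [hce]
        have h2 : e.2 = c.2 := (clip_snd_eq_iff hU (mem_Ep he).2 haU).1 h1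
        exact h2 ▸ (hEp e (mem_Ep he).1).2.1
    have hb := balance_int hU hΩo hUΩ ⟨hPV, hQV, hVcl, hEp, hrev, hd1, hbal⟩ hQU hA haU haGV
    rw [← Nat.cast_sum, ← Nat.cast_sum] at hb
    show (∑ c ∈ (GpE G U).filter (fun c => c.1 = a), (Gp G U A).d c) =
      (∑ c ∈ (GpE G U).filter (fun c => c.2 = a), (Gp G U A).d c) + _
    by_cases hA' : a ∈ A <;> simp only [hA', if_true, if_false] at hb ⊢ <;> omega

end conn

/-- Concavity: subadditivity of `x ^ α` for `0 ≤ α ≤ 1`. -/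
lemma real_rpow_add_le {α : ℝ} (hα0 : 0 ≤ α) (hα1 : α ≤ 1) {x y : ℝ}
    (hx : 0 ≤ x) (hy : 0 ≤ y) : (x + y) ^ α ≤ x ^ α + y ^ α := by
  have h := NNReal.rpow_add_le_add_rpow x.toNNReal y.toNNReal hα0 hα1
  have hc : ((x.toNNReal + y.toNNReal : ℝ≥0) : ℝ) = x + y := by
    simp [Real.coe_toNNReal _ hx, Real.coe_toNNReal _ hy]
  calc (x + y) ^ α = (((x.toNNReal + y.toNNReal : ℝ≥0) : ℝ)) ^ α := by rw [hc]
    _ = (((x.toNNReal + y.toNNReal) ^ α : ℝ≥0) : ℝ) := by rw [← NNReal.coe_rpow]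
    _ ≤ ((x.toNNReal ^ α + y.toNNReal ^ α : ℝ≥0) : ℝ) := by exact_mod_cast h
    _ = x ^ α + y ^ α := by
        push_cast [NNReal.coe_rpow, Real.coe_toNNReal _ hx, Real.coe_toNNReal _ hy]
        ring

lemma rpow_sum_le {α : ℝ} (hα0 : 0 < α) (hα1 : α ≤ 1) {ι : Type*} (s : Finset ι)
    (f : ι → ℝ) (hf : ∀ i ∈ s, 0 ≤ f i) :
    (∑ i ∈ s, f i) ^ α ≤ ∑ i ∈ s, (f i) ^ α := by
  classical
  induction s using Finset.induction with
  | empty => simp [Real.zero_rpow (ne_of_gt hα0)]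
  | insert a s ha ih =>
    rw [Finset.sum_insert ha, Finset.sum_insert ha]
    have h1 : (f a + ∑ i ∈ s, f i) ^ α ≤ f a ^ α + (∑ i ∈ s, f i) ^ α :=
      real_rpow_add_le hα0.le hα1 (hf a (Finset.mem_insert_self a s))
        (Finset.sum_nonneg fun i hi => hf i (Finset.mem_insert_of_mem hi))
    exact h1.trans (add_le_add_right (ih fun i hi => hf i (Finset.mem_insert_of_mem hi)) _)

section costsec
variable {U : Set (Pt m)} {G : BrGraph m} {A : Finset (Pt m)}


lemma cost_Gp_le {α : ℝ} (hα0 : 0 < α) (hα1 : α ≤ 1) (hU : IsOpen U) :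
    (Gp G U A).cost α ≤
      ∑ e ∈ Ep G U, (G.d e : ℝ) ^ α * ((t1 U e - t0 U e) * ‖e.2 - e.1‖) := by
  have step1 : (Gp G U A).cost α ≤
      ∑ c ∈ GpE G U, (Dm G U c : ℝ) ^ α * ‖c.2 - c.1‖ := by
    refine Finset.sum_le_sum fun c _ => ?_
    refine mul_le_mul_of_nonneg_right ?_ (norm_nonneg _)
    refine Real.rpow_le_rpow (Nat.cast_nonneg _) ?_ hα0.le
    exact_mod_cast Nat.sub_le _ _
  have step2 : ∑ c ∈ GpE G U, (Dm G U c : ℝ) ^ α * ‖c.2 - c.1‖ ≤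
      ∑ c ∈ clipped G U, (Dm G U c : ℝ) ^ α * ‖c.2 - c.1‖ := by
    refine Finset.sum_le_sum_of_subset_of_nonneg (Finset.filter_subset _ _) fun c _ _ => ?_
    exact mul_nonneg (Real.rpow_nonneg (Nat.cast_nonneg _) _) (norm_nonneg _)
  have step3 : ∑ c ∈ clipped G U, (Dm G U c : ℝ) ^ α * ‖c.2 - c.1‖ ≤
      ∑ c ∈ clipped G U,
        (∑ e ∈ (Ep G U).filter (fun e => clip U e = c), (G.d e : ℝ) ^ α) * ‖c.2 - c.1‖ := by
    refine Finset.sum_le_sum fun c _ => ?_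
    refine mul_le_mul_of_nonneg_right ?_ (norm_nonneg _)
    have hD : (Dm G U c : ℝ) = ∑ e ∈ (Ep G U).filter (fun e => clip U e = c), (G.d e : ℝ) := by
      simp [Dm]
    rw [hD]
    exact rpow_sum_le hα0 hα1 _ _ fun e _ => Nat.cast_nonneg _
  have step4 : ∑ c ∈ clipped G U,
        (∑ e ∈ (Ep G U).filter (fun e => clip U e = c), (G.d e : ℝ) ^ α) * ‖c.2 - c.1‖ =
      ∑ e ∈ Ep G U, (G.d e : ℝ) ^ α * ‖(clip U e).2 - (clip U e).1‖ := by
    have h1 : ∀ c ∈ clipped G U,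
        (∑ e ∈ (Ep G U).filter (fun e => clip U e = c), (G.d e : ℝ) ^ α) * ‖c.2 - c.1‖ =
        ∑ e ∈ (Ep G U).filter (fun e => clip U e = c),
          (G.d e : ℝ) ^ α * ‖(clip U e).2 - (clip U e).1‖ := by
      intro c _
      rw [Finset.sum_mul]
      refine Finset.sum_congr rfl fun e he => ?_
      rw [(Finset.mem_filter.1 he).2]
    rw [Finset.sum_congr rfl h1, Finset.sum_fiberwise_eq_sum_filter]
    refine Finset.sum_congr ?_ fun _ _ => rfl
    refine Finset.filter_true_of_mem fun e he => Finset.mem_image_of_mem _ he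
  have step5 : ∑ e ∈ Ep G U, (G.d e : ℝ) ^ α * ‖(clip U e).2 - (clip U e).1‖ =
      ∑ e ∈ Ep G U, (G.d e : ℝ) ^ α * ((t1 U e - t0 U e) * ‖e.2 - e.1‖) := by
    refine Finset.sum_congr rfl fun e he => ?_
    rw [clip_len (mem_Ep he).2]
  linarith [step1, step2, step3, le_of_eq step4, le_of_eq step5]

end costsec

/-- Sum of lengths of subintervals of `[0,1]` with pairwise disjoint interiors. -/
lemma sum_len_le_one {ι : Type*} (s : Finset ι) (a b : ι → ℝ)
    (h : ∀ i ∈ s, 0 ≤ a i ∧ a i ≤ b i ∧ b i ≤ 1)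
    (hd : ∀ i ∈ s, ∀ j ∈ s, i ≠ j → Disjoint (Set.Ioo (a i) (b i)) (Set.Ioo (a j) (b j))) :
    ∑ i ∈ s, (b i - a i) ≤ 1 := by
  classical
  have key : ∑ i ∈ s, ENNReal.ofReal (b i - a i) ≤ 1 := by
    have e1 : ∑ i ∈ s, ENNReal.ofReal (b i - a i) =
        ∑ i ∈ s, volume (Set.Ioo (a i) (b i)) := by
      exact Finset.sum_congr rfl fun i _ => (Real.volume_Ioo).symm
    rw [e1]
    have e2 : ∑ i ∈ s, volume (Set.Ioo (a i) (b i)) =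
        volume (⋃ i ∈ s, Set.Ioo (a i) (b i)) := by
      refine (measure_biUnion_finset ?_ fun i _ => measurableSet_Ioo).symm
      intro i hi j hj hij
      exact hd i hi j hj hij
    rw [e2]
    calc volume (⋃ i ∈ s, Set.Ioo (a i) (b i)) ≤ volume (Set.Icc (0:ℝ) 1) := by
          refine measure_mono ?_
          intro x hx
          simp only [Set.mem_iUnion] at hx
          obtain ⟨i, hi, hx⟩ := hx
          obtain ⟨h0, h1, h2⟩ := h i hi
          exact ⟨by linarith [hx.1], by linarith [hx.2]⟩
      _ = 1 := by rw [Real.volume_Icc]; simp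
  have h2 : ENNReal.ofReal (∑ i ∈ s, (b i - a i)) ≤ ENNReal.ofReal 1 := by
    rw [ENNReal.ofReal_sum_of_nonneg fun i hi => by linarith [(h i hi).2.1]]
    simpa using key
  exact (ENNReal.ofReal_le_ofReal_iff zero_le_one).1 h2

end Stmt16

open Stmt16 in
/-- If `(Ω_p)` is a finite family of pairwise disjoint open convex subsets of an open set
`Ω ⊆ ℝ^m`, and `P, Q ⊆ Ω` are disjoint finite sets with `Q ∩ cl Ω_p = ∅` and
`P ∩ ∂Ω_p = ∅` for every `p`, then
`ℒ^α_brbd(P, Q, Ω) ≥ Σ_p ℒ^α_brbd(P ∩ Ω_p, ∂Ω_p)`. -/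
theorem statement16 (m : ℕ) (α : ℝ) (hα0 : 0 < α) (hα1 : α ≤ 1)
    (Ω : Set (Pt m)) (hΩo : IsOpen Ω)
    (P Q : Finset (Pt m)) (hP : (P : Set (Pt m)) ⊆ Ω) (hQ : (Q : Set (Pt m)) ⊆ Ω)
    (hPQ : Disjoint P Q)
    (ι : Type) [Fintype ι] (Ωp : ι → Set (Pt m))
    (hsub : ∀ p, Ωp p ⊆ Ω) (hopen : ∀ p, IsOpen (Ωp p)) (hconv : ∀ p, Convex ℝ (Ωp p))
    (hdisj : ∀ p q, p ≠ q → Disjoint (Ωp p) (Ωp q))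
    (hQcl : ∀ p, (Q : Set (Pt m)) ∩ closure (Ωp p) = ∅)
    (hPfr : ∀ p, (P : Set (Pt m)) ∩ frontier (Ωp p) = ∅)
    (Pp : ι → Finset (Pt m)) (hPp : ∀ p, (Pp p : Set (Pt m)) = (P : Set (Pt m)) ∩ Ωp p) :
    ∑ p, Lbrbd m α (Pp p) (Ωp p) ≤ LbrbdPQ m α P Q Ω := by
  simp only [LbrbdPQ]
  refine le_iInf fun G => le_iInf fun hG => ?_
  have conn : ∀ p : ι, (Gp G (Ωp p) (Pp p)).IsConn (Pp p) (Ωp p) :=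
    fun p => isConn_Gp (hopen p) hΩo (hsub p) hG (hQcl p) (hPp p)
  have hL : ∀ p : ι, Lbrbd m α (Pp p) (Ωp p) ≤
      ENNReal.ofReal ((Gp G (Ωp p) (Pp p)).cost α) := by
    intro p
    simp only [Lbrbd]
    exact iInf_le_of_le (Gp G (Ωp p) (Pp p)) (iInf_le_of_le (conn p) le_rfl)
  set B : ι → ℝ := fun p => ∑ e ∈ Ep G (Ωp p),
    (G.d e : ℝ) ^ α * ((t1 (Ωp p) e - t0 (Ωp p) e) * ‖e.2 - e.1‖) with hB
  have hBnn : ∀ p, 0 ≤ B p := by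
    intro p
    refine Finset.sum_nonneg fun e he => ?_
    have h2 := t0_le_t1 (mem_Ep he).2
    exact mul_nonneg (Real.rpow_nonneg (Nat.cast_nonneg _) _)
      (mul_nonneg (by linarith) (norm_nonneg _))
  have hcost : ∀ p, (Gp G (Ωp p) (Pp p)).cost α ≤ B p :=
    fun p => cost_Gp_le hα0 hα1 (hopen p)
  have hsum : ∑ p, B p ≤ G.cost α := by
    have e1 : ∀ p : ι, B p = ∑ e ∈ G.E,
        (if e.1 ∈ Ωp p ∨ e.2 ∈ Ωp p then
          (G.d e : ℝ) ^ α * ((t1 (Ωp p) e - t0 (Ωp p) e) * ‖e.2 - e.1‖) else 0) := by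
      intro p
      rw [hB]
      exact Finset.sum_filter _ _
    rw [Finset.sum_congr rfl fun p _ => e1 p, Finset.sum_comm]
    refine Finset.sum_le_sum fun e he => ?_
    have e2 : ∀ p : ι,
        (if e.1 ∈ Ωp p ∨ e.2 ∈ Ωp p then
          (G.d e : ℝ) ^ α * ((t1 (Ωp p) e - t0 (Ωp p) e) * ‖e.2 - e.1‖) else 0) =
        (G.d e : ℝ) ^ α * ‖e.2 - e.1‖ *
          (if e.1 ∈ Ωp p ∨ e.2 ∈ Ωp p then (t1 (Ωp p) e - t0 (Ωp p) e) else 0) := by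
      intro p
      split_ifs <;> ring
    rw [Finset.sum_congr rfl fun p _ => e2 p, ← Finset.mul_sum]
    have e3 : (∑ p : ι, (if e.1 ∈ Ωp p ∨ e.2 ∈ Ωp p
        then (t1 (Ωp p) e - t0 (Ωp p) e) else 0)) =
        ∑ p ∈ Finset.univ.filter (fun p => e.1 ∈ Ωp p ∨ e.2 ∈ Ωp p),
          (t1 (Ωp p) e - t0 (Ωp p) e) := (Finset.sum_filter _ _).symm
    have e4 : (∑ p ∈ Finset.univ.filter (fun p => e.1 ∈ Ωp p ∨ e.2 ∈ Ωp p),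
          (t1 (Ωp p) e - t0 (Ωp p) e)) ≤ 1 := by
      refine sum_len_le_one _ (fun p => t0 (Ωp p) e) (fun p => t1 (Ωp p) e) ?_ ?_
      · intro p hp
        have hep : e.1 ∈ Ωp p ∨ e.2 ∈ Ωp p := (Finset.mem_filter.1 hp).2
        exact ⟨t0_nonneg hep, t0_le_t1 hep, t1_le_one hep⟩
      · intro p hp q hq hpq
        have hep : e.1 ∈ Ωp p ∨ e.2 ∈ Ωp p := (Finset.mem_filter.1 hp).2
        have heq : e.1 ∈ Ωp q ∨ e.2 ∈ Ωp q := (Finset.mem_filter.1 hq).2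
        refine Set.disjoint_left.2 fun t htp htq => ?_
        have h1 := gam_mem_of_Ioo (hopen p) (hconv p) hep htp
        have h2 := gam_mem_of_Ioo (hopen q) (hconv q) heq htq
        exact Set.disjoint_left.1 (hdisj p q hpq) h1 h2
    have hKL : (0:ℝ) ≤ (G.d e : ℝ) ^ α * ‖e.2 - e.1‖ :=
      mul_nonneg (Real.rpow_nonneg (Nat.cast_nonneg _) _) (norm_nonneg _)
    calc (G.d e : ℝ) ^ α * ‖e.2 - e.1‖ *
          (∑ p : ι, (if e.1 ∈ Ωp p ∨ e.2 ∈ Ωp p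
            then (t1 (Ωp p) e - t0 (Ωp p) e) else 0))
        ≤ (G.d e : ℝ) ^ α * ‖e.2 - e.1‖ * 1 := by
          refine mul_le_mul_of_nonneg_left ?_ hKL
          rw [e3]; exact e4
      _ = (G.d e : ℝ) ^ α * ‖e.2 - e.1‖ := mul_one _
  calc ∑ p, Lbrbd m α (Pp p) (Ωp p)
      ≤ ∑ p, ENNReal.ofReal (B p) :=
        Finset.sum_le_sum fun p _ => (hL p).trans (ENNReal.ofReal_le_ofReal (hcost p))
    _ = ENNReal.ofReal (∑ p, B p) :=
        (ENNReal.ofReal_sum_of_nonneg fun p _ => hBnn p).symm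
    _ ≤ ENNReal.ofReal (G.cost α) := ENNReal.ofReal_le_ofReal hsum

end
end
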